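/- arXiv:2406.18150 — 6 statements merged into one kernel-verified Lean document; each statement's English description precedes it below -/
import Mathlib

section
/- For every real t > 0, the integrand s ↦ (t/(2π))^{i(s−iσ)/2} · ζ(1/2 + σ + i(t+s)) · π/(2 sinh(π(s−iσ)/2)) is integrable over ℝ for each σ ∈ (1/2, 2), and the value G_σ(t) is the same for all σ ∈ (1/2, 2). -/
open Complex MeasureTheory Real Set

noncomputable section

/-- The integrand in the definition of `G_σ(t)`:
`(t/(2π))^{i(s−iσ)/2} · ζ(1/2 + σ + i(t+s)) · π/(2 sinh(π(s−iσ)/2))`,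
where `(t/(2π))^w := exp(w·log(t/(2π)))`. -/
def Gker (σ t : ℝ) (s : ℝ) : ℂ :=
  Complex.exp (Complex.I * ((s : ℂ) - Complex.I * σ) / 2 * Real.log (t / (2 * π))) *
    riemannZeta (1/2 + σ + Complex.I * ((t : ℂ) + s)) *
    ((π : ℂ) / (2 * Complex.sinh ((π : ℂ) * ((s : ℂ) - Complex.I * σ) / 2)))

/-- `G_σ(t) := (1/(2πi)) ∫_ℝ (t/(2π))^{i(s−iσ)/2} ζ(1/2+σ+i(t+s)) π/(2 sinh(π(s−iσ)/2)) ds`. -/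
def G (σ : ℝ) (t : ℝ) : ℂ :=
  (2 * (π : ℂ) * Complex.I)⁻¹ * ∫ s : ℝ, Gker σ t s

open Filter

/-- kernel as function of a complex variable -/
def Hf (t : ℝ) (z : ℂ) : ℂ :=
  Complex.exp (Complex.I * z / 2 * Real.log (t / (2 * π))) *
    riemannZeta (1/2 + Complex.I * (t : ℂ) + Complex.I * z) *
    ((π : ℂ) / (2 * Complex.sinh ((π : ℂ) * z / 2)))

lemma Gker_eq (σ t : ℝ) (s : ℝ) : Gker σ t s = Hf t ((s : ℂ) - Complex.I * σ) := by
  unfold Gker Hf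
  rw [show (1/2 + (σ:ℂ) + Complex.I * ((t : ℂ) + s))
      = 1/2 + Complex.I * (t:ℂ) + Complex.I * ((s:ℂ) - Complex.I*σ) by ring_nf; rw [Complex.I_sq]; ring]

lemma sinh_im' (w : ℂ) : (Complex.sinh w).im = Real.cosh w.re * Real.sin w.im := by
  have h2 : Complex.sinh w * 2 = Complex.exp w - Complex.exp (-w) := by
    rw [mul_comm]; exact Complex.two_sinh w
  have h3 := congrArg Complex.im h2
  simp only [Complex.mul_im, Complex.sub_im, Complex.exp_im, Complex.neg_re, Complex.neg_im,
    Real.sin_neg, Complex.re_ofNat, Complex.im_ofNat, mul_zero, zero_add, mul_neg, neg_neg] at h3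
  rw [Real.cosh_eq]
  rw [Real.exp_neg] at *
  linarith [h3]

lemma norm_sinh_ge_abs_sin (w : ℂ) : |Real.sin w.im| ≤ ‖Complex.sinh w‖ := by
  have h1 : |Real.sin w.im| ≤ |(Complex.sinh w).im| := by
    rw [sinh_im', abs_mul, abs_of_pos (Real.cosh_pos _)]
    nlinarith [Real.one_le_cosh w.re, abs_nonneg (Real.sin w.im)]
  exact h1.trans (Complex.abs_im_le_norm _)

lemma norm_sinh_ge_sinh_abs_re (w : ℂ) : Real.sinh |w.re| ≤ ‖Complex.sinh w‖ := by
  have h2 : (2:ℂ) * Complex.sinh w = Complex.exp w - Complex.exp (-w) := Complex.two_sinh w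
  have h3 : |‖Complex.exp w‖ - ‖Complex.exp (-w)‖| ≤ ‖Complex.exp w - Complex.exp (-w)‖ :=
    abs_norm_sub_norm_le _ _
  rw [← h2] at h3
  have h4 : ‖(2:ℂ) * Complex.sinh w‖ = 2 * ‖Complex.sinh w‖ := by
    rw [norm_mul]; norm_num
  rw [h4] at h3
  have h5 : ‖Complex.exp w‖ = rexp w.re := by rw [Complex.norm_exp]
  have h6 : ‖Complex.exp (-w)‖ = rexp (-w.re) := by
    rw [Complex.norm_exp, Complex.neg_re]
  rw [h5, h6] at h3
  have h7 : rexp w.re - rexp (-w.re) = 2 * Real.sinh w.re := by rw [Real.sinh_eq]; ring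
  rw [h7, abs_mul, show |(2:ℝ)| = 2 from by norm_num, Real.abs_sinh] at h3
  linarith

def Zb (a : ℝ) : ℝ := ∑' n : ℕ, 1 / (n:ℝ) ^ a

lemma Zb_summable {a : ℝ} (ha : 1 < a) : Summable (fun n : ℕ => 1/(n:ℝ)^a) :=
  Real.summable_one_div_nat_rpow.mpr ha

lemma Zb_nonneg (a : ℝ) : 0 ≤ Zb a := tsum_nonneg (fun n => by positivity)

lemma norm_zeta_le {a : ℝ} (ha : 1 < a) {w : ℂ} (hw : a ≤ w.re) : ‖riemannZeta w‖ ≤ Zb a := by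
  have h1 : 1 < w.re := lt_of_lt_of_le ha hw
  have hw0 : w ≠ 0 := by intro h; rw [h] at h1; norm_num at h1
  have hterm : ∀ n : ℕ, ‖1/(n:ℂ)^w‖ ≤ 1/(n:ℝ)^a := by
    intro n
    rcases Nat.eq_zero_or_pos n with hn | hn
    · subst hn
      simp [Complex.zero_cpow hw0, Real.zero_rpow (by linarith : a ≠ 0)]
    · rw [norm_div, norm_one, Complex.norm_natCast_cpow_of_pos hn]
      have h1n : (1:ℝ) ≤ (n:ℝ) := by exact_mod_cast hn
      have hmono : (n:ℝ)^a ≤ (n:ℝ)^w.re := Real.rpow_le_rpow_of_exponent_le h1n hw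
      have hpos : (0:ℝ) < (n:ℝ)^a := Real.rpow_pos_of_pos (by linarith) a
      exact one_div_le_one_div_of_le hpos hmono
  have hs : Summable (fun n : ℕ => ‖1/(n:ℂ)^w‖) :=
    Summable.of_nonneg_of_le (fun n => norm_nonneg _) hterm (Zb_summable ha)
  rw [zeta_eq_tsum_one_div_nat_cpow h1]
  exact (norm_tsum_le_tsum_norm hs).trans (Summable.tsum_le_tsum hterm hs (Zb_summable ha))

lemma exp_arg_re (t : ℝ) (z : ℂ) :
    (Complex.I * z / 2 * (Real.log (t / (2 * π)) : ℂ)).re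
      = -z.im * Real.log (t / (2*π)) / 2 := by
  simp [Complex.mul_re, Complex.mul_im, Complex.div_re, Complex.div_im]
  ring

lemma Hf_norm_le (t : ℝ) {a : ℝ} (ha : 1 < a) {z : ℂ} (him : |z.im| ≤ 2)
    (hre : a ≤ 1/2 - z.im) :
    ‖Hf t z‖ ≤ rexp |Real.log (t/(2*π))| * Zb a *
      (π / (2 * ‖Complex.sinh ((π:ℂ)*z/2)‖)) := by
  unfold Hf
  rw [norm_mul, norm_mul, norm_div, norm_mul]
  have e1 : ‖Complex.exp (Complex.I * z / 2 * (Real.log (t / (2 * π)) : ℂ))‖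
      ≤ rexp |Real.log (t/(2*π))| := by
    rw [Complex.norm_exp, exp_arg_re]
    apply Real.exp_le_exp.mpr
    calc -z.im * Real.log (t/(2*π)) / 2 ≤ |(-z.im) * Real.log (t/(2*π)) / 2| := le_abs_self _
    _ = |z.im| * |Real.log (t/(2*π))| / 2 := by rw [abs_div, abs_mul, abs_neg]; norm_num
    _ ≤ 2 * |Real.log (t/(2*π))| / 2 := by gcongr
    _ = |Real.log (t/(2*π))| := by ring
  have e2 : ‖riemannZeta (1/2 + Complex.I * (t:ℂ) + Complex.I * z)‖ ≤ Zb a := by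
    apply norm_zeta_le ha
    have : (1/2 + Complex.I * (t:ℂ) + Complex.I * z).re = 1/2 - z.im := by
      simp [Complex.add_re, Complex.mul_re]
      ring
    rw [this]; exact hre
  have e3 : ‖(π:ℂ)‖ = π := by
    rw [Complex.norm_real, Real.norm_eq_abs, abs_of_pos Real.pi_pos]
  have e4 : ‖(2:ℂ)‖ = (2:ℝ) := by norm_num
  rw [e3, e4]
  have hnn : (0:ℝ) ≤ π / (2 * ‖Complex.sinh ((π:ℂ)*z/2)‖) := by positivity
  gcongr

lemma pi_z_im (z : ℂ) : ((π:ℂ) * z / 2).im = π * z.im / 2 := by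
  simp [Complex.mul_im, Complex.div_im]

lemma pi_z_re (z : ℂ) : ((π:ℂ) * z / 2).re = π * z.re / 2 := by
  simp [Complex.mul_re, Complex.div_re]

lemma sinh_ne_zero_strip {z : ℂ} (h1 : -2 < z.im) (h2 : z.im < -2⁻¹) :
    Complex.sinh ((π:ℂ) * z / 2) ≠ 0 := by
  intro h
  have hs : Real.sin (((π:ℂ) * z / 2).im) < 0 := by
    rw [pi_z_im]
    apply Real.sin_neg_of_neg_of_neg_pi_lt
    · nlinarith [Real.pi_pos]
    · nlinarith [Real.pi_pos]
  have h0 := norm_sinh_ge_abs_sin ((π:ℂ) * z / 2)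
  rw [h, norm_zero] at h0
  have := abs_nonneg (Real.sin (((π:ℂ) * z / 2).im))
  have heq : |Real.sin (((π:ℂ) * z / 2).im)| = 0 := le_antisymm h0 this
  rw [abs_eq_zero] at heq
  linarith

lemma Hf_diffAt (t : ℝ) {z : ℂ} (h1 : -2 < z.im) (h2 : z.im < -2⁻¹) :
    DifferentiableAt ℂ (Hf t) z := by
  apply DifferentiableAt.mul (DifferentiableAt.mul ?_ ?_) ?_
  · apply DifferentiableAt.cexp
    fun_prop
  · have harg : (1/2 + Complex.I * (t:ℂ) + Complex.I * z) ≠ 1 := by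
      intro h
      have := congrArg Complex.re h
      simp [Complex.add_re, Complex.mul_re] at this
      linarith
    exact (differentiableAt_riemannZeta harg).comp z (by fun_prop)
  · apply DifferentiableAt.div (differentiableAt_const _) (by fun_prop)
    exact mul_ne_zero two_ne_zero (sinh_ne_zero_strip h1 h2)

lemma quarter_exp_le_sinh {x : ℝ} (hx : 1 ≤ x) : rexp x / 4 ≤ Real.sinh x := by
  rw [Real.sinh_eq]
  have h1 : rexp (-x) ≤ 1 := Real.exp_le_one_iff.mpr (by linarith)
  have h2 : (2:ℝ) ≤ rexp x := by
    have := Real.add_one_le_exp x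
    linarith
  linarith

lemma Gker_continuous {σ : ℝ} (hσ : σ ∈ Ioo (1/2:ℝ) 2) (t : ℝ) : Continuous (Gker σ t) := by
  obtain ⟨hσ1, hσ2⟩ := hσ
  unfold Gker
  refine Continuous.mul (Continuous.mul ?_ ?_) ?_
  · apply Complex.continuous_exp.comp
    fun_prop
  · rw [continuous_iff_continuousAt]
    intro s
    have harg : Continuous fun s : ℝ => (1/2 + (σ:ℂ) + Complex.I * ((t:ℂ) + s)) := by fun_prop
    apply ContinuousAt.comp _ harg.continuousAt
    apply (differentiableAt_riemannZeta ?_).continuousAt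
    intro h
    have := congrArg Complex.re h
    simp [Complex.add_re, Complex.mul_re] at this
    linarith
  · apply Continuous.div continuous_const
    · fun_prop
    · intro s
      apply mul_ne_zero two_ne_zero
      have h := sinh_ne_zero_strip (z := (s:ℂ) - Complex.I * σ) ?_ ?_
      · exact h
      · simp; linarith
      · simp; linarith

lemma Gker_bound {σ : ℝ} (hσ : σ ∈ Ioo (1/2:ℝ) 2) (t : ℝ) (s : ℝ) :
    ‖Gker σ t s‖ ≤ (rexp |Real.log (t/(2*π))| * Zb (1/2+σ) *
      (π / (2 * min (Real.sin (π*σ/2) * rexp (-2)) 4⁻¹))) * rexp (-|s|) := by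
  obtain ⟨hσ1, hσ2⟩ := hσ
  set z : ℂ := (s:ℂ) - Complex.I * σ with hz
  have hzre : z.re = s := by simp [hz]
  have hzim : z.im = -σ := by simp [hz]
  set m : ℝ := Real.sin (π*σ/2) with hm_def
  set c : ℝ := min (m * rexp (-2)) 4⁻¹ with hc_def
  have hm : 0 < m := by
    apply Real.sin_pos_of_pos_of_lt_pi
    · nlinarith [Real.pi_pos]
    · nlinarith [Real.pi_pos]
  have hc : 0 < c := lt_min (by positivity) (by norm_num)
  -- lower bound on the sinh factor
  have key : c * rexp |s| ≤ ‖Complex.sinh ((π:ℂ) * z / 2)‖ := by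
    have h1 : m ≤ ‖Complex.sinh ((π:ℂ) * z / 2)‖ := by
      have := norm_sinh_ge_abs_sin ((π:ℂ) * z / 2)
      rw [pi_z_im, hzim] at this
      rw [show π * (-σ) / 2 = -(π*σ/2) by ring, Real.sin_neg, abs_neg,
        abs_of_pos hm] at this
      exact this
    have h2 : Real.sinh (π * |s| / 2) ≤ ‖Complex.sinh ((π:ℂ) * z / 2)‖ := by
      have := norm_sinh_ge_sinh_abs_re ((π:ℂ) * z / 2)
      rw [pi_z_re, hzre] at this
      rwa [abs_div, abs_mul, abs_of_pos Real.pi_pos,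
        show |(2:ℝ)| = 2 by norm_num] at this
    rcases le_or_gt |s| 2 with h | h
    · calc c * rexp |s| ≤ (m * rexp (-2)) * rexp 2 := by
            apply mul_le_mul (min_le_left _ _) (Real.exp_le_exp.mpr h)
              (Real.exp_pos _).le (by positivity)
        _ = m := by rw [mul_assoc, ← Real.exp_add]; norm_num
        _ ≤ _ := h1
    · have h4 : rexp |s| / 4 ≤ Real.sinh |s| := quarter_exp_le_sinh (by linarith)
      have h5 : Real.sinh |s| ≤ Real.sinh (π * |s| / 2) := by
        apply Real.sinh_le_sinh.mpr
        nlinarith [Real.pi_gt_three, abs_nonneg s]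
      have h6 : c * rexp |s| ≤ 4⁻¹ * rexp |s| :=
        mul_le_mul_of_nonneg_right (min_le_right _ _) (Real.exp_pos _).le
      calc c * rexp |s| ≤ 4⁻¹ * rexp |s| := h6
        _ = rexp |s| / 4 := by ring
        _ ≤ _ := h4.trans (h5.trans h2)
  have ha : (1:ℝ) < 1/2 + σ := by linarith
  have hmain := Hf_norm_le t ha (z := z) (by rw [hzim]; rw [abs_neg, abs_of_pos (by linarith)]; linarith)
    (by rw [hzim]; linarith)
  rw [Gker_eq, ← hz]
  refine hmain.trans ?_
  have hfrac : π / (2 * ‖Complex.sinh ((π:ℂ)*z/2)‖) ≤ (π / (2 * c)) * rexp (-|s|) := by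
    have hpos : (0:ℝ) < 2 * (c * rexp |s|) := by positivity
    have hstep : π / (2 * ‖Complex.sinh ((π:ℂ)*z/2)‖) ≤ π / (2 * (c * rexp |s|)) := by
      apply div_le_div_of_nonneg_left Real.pi_pos.le hpos
      nlinarith [key]
    refine hstep.trans (le_of_eq ?_)
    rw [Real.exp_neg]
    field_simp
  calc rexp |Real.log (t/(2*π))| * Zb (1/2+σ) * (π / (2 * ‖Complex.sinh ((π:ℂ)*z/2)‖))
      ≤ rexp |Real.log (t/(2*π))| * Zb (1/2+σ) * ((π / (2 * c)) * rexp (-|s|)) := by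
        apply mul_le_mul_of_nonneg_left hfrac
        exact mul_nonneg (Real.exp_pos _).le (Zb_nonneg _)
    _ = (rexp |Real.log (t/(2*π))| * Zb (1/2+σ) * (π / (2 * c))) * rexp (-|s|) := by ring

lemma integrable_exp_neg_abs : Integrable (fun s : ℝ => rexp (-|s|)) := by
  rw [← integrableOn_univ, ← Set.Iic_union_Ioi (a := (0:ℝ))]
  apply MeasureTheory.IntegrableOn.union
  · apply (integrableOn_exp_Iic 0).congr_fun _ measurableSet_Iic
    intro x hx
    simp only [Set.mem_Iic] at hx
    show rexp x = rexp (-|x|)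
    rw [abs_of_nonpos hx, neg_neg]
  · apply (exp_neg_integrableOn_Ioi 0 one_pos).congr_fun _ measurableSet_Ioi
    intro x hx
    simp only [Set.mem_Ioi] at hx
    show rexp (-1*x) = rexp (-|x|)
    rw [abs_of_pos hx, neg_one_mul]

lemma Gker_integrable {σ : ℝ} (hσ : σ ∈ Ioo (1/2:ℝ) 2) (t : ℝ) :
    Integrable (Gker σ t) := by
  apply Integrable.mono' (integrable_exp_neg_abs.const_mul
    (rexp |Real.log (t/(2*π))| * Zb (1/2+σ) *
      (π / (2 * min (Real.sin (π*σ/2) * rexp (-2)) 4⁻¹))))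
    (Gker_continuous hσ t).aestronglyMeasurable
  filter_upwards with s
  exact Gker_bound hσ t s

lemma Hf_vert_bound (t : ℝ) {a : ℝ} (ha : 1 < a) {z : ℂ} (him : |z.im| ≤ 2)
    (hre : a ≤ 1/2 - z.im) (hzre : 1 ≤ |z.re|) :
    ‖Hf t z‖ ≤ rexp |Real.log (t/(2*π))| * Zb a * (2*π) * rexp (-|z.re|) := by
  refine (Hf_norm_le t ha him hre).trans ?_
  have h2 : Real.sinh (π * |z.re| / 2) ≤ ‖Complex.sinh ((π:ℂ) * z / 2)‖ := by
    have := norm_sinh_ge_sinh_abs_re ((π:ℂ) * z / 2)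
    rw [pi_z_re] at this
    rwa [abs_div, abs_mul, abs_of_pos Real.pi_pos, show |(2:ℝ)| = 2 by norm_num] at this
  have h4 : rexp |z.re| / 4 ≤ Real.sinh |z.re| := quarter_exp_le_sinh hzre
  have h5 : Real.sinh |z.re| ≤ Real.sinh (π * |z.re| / 2) := by
    apply Real.sinh_le_sinh.mpr
    nlinarith [Real.pi_gt_three, abs_nonneg z.re]
  have hkey : rexp |z.re| / 4 ≤ ‖Complex.sinh ((π:ℂ) * z / 2)‖ := h4.trans (h5.trans h2)
  have hfrac : π / (2 * ‖Complex.sinh ((π:ℂ)*z/2)‖) ≤ (2*π) * rexp (-|z.re|) := by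
    have hpos : (0:ℝ) < 2 * (rexp |z.re| / 4) := by positivity
    have hstep : π / (2 * ‖Complex.sinh ((π:ℂ)*z/2)‖) ≤ π / (2 * (rexp |z.re| / 4)) :=
      div_le_div_of_nonneg_left Real.pi_pos.le hpos (by nlinarith [hkey])
    refine hstep.trans (le_of_eq ?_)
    rw [Real.exp_neg]
    field_simp
    ring
  calc rexp |Real.log (t/(2*π))| * Zb a * (π / (2 * ‖Complex.sinh ((π:ℂ)*z/2)‖))
      ≤ rexp |Real.log (t/(2*π))| * Zb a * ((2*π) * rexp (-|z.re|)) :=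
        mul_le_mul_of_nonneg_left hfrac (mul_nonneg (Real.exp_pos _).le (Zb_nonneg _))
    _ = _ := by ring

set_option maxHeartbeats 1000000 in
lemma integral_shift (t : ℝ) {σ₁ σ₂ : ℝ} (h₁ : σ₁ ∈ Ioo (1/2:ℝ) 2)
    (h₂ : σ₂ ∈ Ioo (1/2:ℝ) 2) (hle : σ₁ ≤ σ₂) :
    ∫ s : ℝ, Gker σ₁ t s = ∫ s : ℝ, Gker σ₂ t s := by
  obtain ⟨h11, h12⟩ := h₁
  obtain ⟨h21, h22⟩ := h₂
  have ha : (1:ℝ) < 1/2 + σ₁ := by linarith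
  -- rectangle identity
  have hrect : ∀ R : ℝ,
      ((∫ x in (-R)..R, Gker σ₂ t x) - ∫ x in (-R)..R, Gker σ₁ t x)
        + Complex.I • (∫ y in (-σ₂)..(-σ₁), Hf t ((R:ℂ) + (y:ℂ) * Complex.I))
        - Complex.I • (∫ y in (-σ₂)..(-σ₁), Hf t ((-R:ℂ) + (y:ℂ) * Complex.I)) = 0 := by
    intro R
    have hdiff : DifferentiableOn ℂ (Hf t)
        (uIcc (⟨-R, -σ₂⟩ : ℂ).re (⟨R, -σ₁⟩ : ℂ).re ×ℂ
          uIcc (⟨-R, -σ₂⟩ : ℂ).im (⟨R, -σ₁⟩ : ℂ).im) := by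
      intro w hw
      rw [Complex.mem_reProdIm] at hw
      have him : w.im ∈ uIcc (-σ₂) (-σ₁) := hw.2
      rw [uIcc_of_le (by linarith : -σ₂ ≤ -σ₁)] at him
      exact (Hf_diffAt t (by linarith [him.1] : -2 < w.im)
        (by have := him.2; have h0 : (2:ℝ)⁻¹ < σ₁ := by
              rw [show ((2:ℝ))⁻¹ = 1/2 by norm_num]; exact h11
            linarith)).differentiableWithinAt
    have key := Complex.integral_boundary_rect_eq_zero_of_differentiableOn (Hf t)
      ⟨-R, -σ₂⟩ ⟨R, -σ₁⟩ hdiff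
    have e2 : (∫ x in (-R)..R, Hf t ((x:ℂ) + ((-σ₂:ℝ):ℂ) * Complex.I))
        = ∫ x in (-R)..R, Gker σ₂ t x := by
      apply intervalIntegral.integral_congr
      intro x hx
      rw [Gker_eq]
      exact congrArg (Hf t) (by push_cast; ring)
    have e1 : (∫ x in (-R)..R, Hf t ((x:ℂ) + ((-σ₁:ℝ):ℂ) * Complex.I))
        = ∫ x in (-R)..R, Gker σ₁ t x := by
      apply intervalIntegral.integral_congr
      intro x hx
      rw [Gker_eq]
      exact congrArg (Hf t) (by push_cast; ring)
    have e3 : (∫ y in (-σ₂)..(-σ₁), Hf t (((R:ℝ):ℂ) + (y:ℂ) * Complex.I))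
        = ∫ y in (-σ₂)..(-σ₁), Hf t ((R:ℂ) + (y:ℂ) * Complex.I) := by norm_num
    have e4 : (∫ y in (-σ₂)..(-σ₁), Hf t (((-R:ℝ):ℂ) + (y:ℂ) * Complex.I))
        = ∫ y in (-σ₂)..(-σ₁), Hf t ((-R:ℂ) + (y:ℂ) * Complex.I) := by norm_num
    rw [show (⟨-R, -σ₂⟩ : ℂ).re = -R from rfl, show (⟨R, -σ₁⟩ : ℂ).re = R from rfl,
      show (⟨-R, -σ₂⟩ : ℂ).im = -σ₂ from rfl, show (⟨R, -σ₁⟩ : ℂ).im = -σ₁ from rfl,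
      e1, e2, e3, e4] at key
    linear_combination key
  -- vertical integrals tend to zero
  set C : ℝ := rexp |Real.log (t/(2*π))| * Zb (1/2+σ₁) * (2*π) with hC
  have hC0 : 0 ≤ C := by
    apply mul_nonneg (mul_nonneg (Real.exp_pos _).le (Zb_nonneg _))
    positivity
  have hvb : ∀ R : ℝ, 1 ≤ R → ∀ x : ℝ, |x| = R →
      ‖Complex.I • (∫ y in (-σ₂)..(-σ₁), Hf t ((x:ℂ) + (y:ℂ) * Complex.I))‖
        ≤ C * rexp (-R) * (σ₂ - σ₁) := by
    intro R hR x hx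
    rw [norm_smul, Complex.norm_I, one_mul]
    have := intervalIntegral.norm_integral_le_of_norm_le_const
      (C := C * rexp (-R)) (f := fun y : ℝ => Hf t ((x:ℂ) + (y:ℂ) * Complex.I))
      (a := -σ₂) (b := -σ₁) ?_
    · refine this.trans (le_of_eq ?_)
      rw [show |(-σ₁) - (-σ₂)| = σ₂ - σ₁ by rw [_root_.abs_of_nonneg (by linarith : (0:ℝ) ≤ -σ₁ - -σ₂)]; ring]
    · intro y hy
      rw [Set.uIoc_of_le (by linarith : -σ₂ ≤ -σ₁)] at hy
      have hzre : ((x:ℂ) + (y:ℂ) * Complex.I).re = x := by simp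
      have hzim : ((x:ℂ) + (y:ℂ) * Complex.I).im = y := by simp
      have hb := Hf_vert_bound t ha (z := (x:ℂ) + (y:ℂ) * Complex.I)
        (by rw [hzim]; rw [abs_le]; constructor <;> [linarith [hy.1]; linarith [hy.2]])
        (by rw [hzim]; linarith [hy.2])
        (by rw [hzre, hx]; exact hR)
      rw [hzre, hx] at hb
      calc ‖Hf t ((x:ℂ) + (y:ℂ) * Complex.I)‖
          ≤ rexp |Real.log (t/(2*π))| * Zb (1/2+σ₁) * (2*π) * rexp (-R) := hb
        _ = C * rexp (-R) := by rw [hC]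
  have hV : Tendsto (fun R : ℝ =>
      Complex.I • (∫ y in (-σ₂)..(-σ₁), Hf t ((-R:ℂ) + (y:ℂ) * Complex.I))
        - Complex.I • (∫ y in (-σ₂)..(-σ₁), Hf t ((R:ℂ) + (y:ℂ) * Complex.I)))
      atTop (nhds 0) := by
    apply squeeze_zero_norm' (a := fun R : ℝ => 2 * (C * rexp (-R) * (σ₂ - σ₁)))
    · filter_upwards [eventually_ge_atTop (1:ℝ)] with R hR
      have hb1 := hvb R hR (-R) (by rw [abs_neg]; exact _root_.abs_of_nonneg (by linarith))
      have hb2 := hvb R hR R (_root_.abs_of_nonneg (by linarith))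
      have : ((-R : ℝ) : ℂ) = (-R : ℂ) := by push_cast; ring
      rw [this] at hb1
      calc ‖_ - _‖ ≤ _ + _ := norm_sub_le _ _
        _ ≤ C * rexp (-R) * (σ₂ - σ₁) + C * rexp (-R) * (σ₂ - σ₁) := add_le_add hb1 hb2
        _ = 2 * (C * rexp (-R) * (σ₂ - σ₁)) := by ring
    · have h0 : Tendsto (fun R : ℝ => rexp (-R)) atTop (nhds 0) :=
        Real.tendsto_exp_atBot.comp tendsto_neg_atTop_atBot
      have : Tendsto (fun R : ℝ => 2 * (C * rexp (-R) * (σ₂ - σ₁))) atTop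
          (nhds (2 * (C * 0 * (σ₂ - σ₁)))) := by
        apply Tendsto.const_mul
        exact (h0.const_mul C).mul_const _
      simpa using this
  -- horizontal integrals tend to the full integrals
  have hT : Tendsto (fun R : ℝ =>
      (∫ x in (-R)..R, Gker σ₂ t x) - ∫ x in (-R)..R, Gker σ₁ t x) atTop
      (nhds ((∫ s : ℝ, Gker σ₂ t s) - ∫ s : ℝ, Gker σ₁ t s)) := by
    apply Tendsto.sub
    · exact intervalIntegral_tendsto_integral (Gker_integrable ⟨h21, h22⟩ t)
        tendsto_neg_atTop_atBot tendsto_id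
    · exact intervalIntegral_tendsto_integral (Gker_integrable ⟨h11, h12⟩ t)
        tendsto_neg_atTop_atBot tendsto_id
  have hEq : (fun R : ℝ =>
      (∫ x in (-R)..R, Gker σ₂ t x) - ∫ x in (-R)..R, Gker σ₁ t x)
      = fun R : ℝ =>
      Complex.I • (∫ y in (-σ₂)..(-σ₁), Hf t ((-R:ℂ) + (y:ℂ) * Complex.I))
        - Complex.I • (∫ y in (-σ₂)..(-σ₁), Hf t ((R:ℂ) + (y:ℂ) * Complex.I)) := by
    funext R
    have := hrect R
    simp only [smul_eq_mul] at *
    linear_combination this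
  rw [hEq] at hT
  have := tendsto_nhds_unique hT hV
  rw [sub_eq_zero] at this
  exact this.symm

theorem stmt_7 (t : ℝ) (ht : 0 < t) :
    (∀ σ ∈ Ioo (1/2 : ℝ) 2, Integrable (Gker σ t)) ∧
    (∀ σ₁ ∈ Ioo (1/2 : ℝ) 2, ∀ σ₂ ∈ Ioo (1/2 : ℝ) 2, G σ₁ t = G σ₂ t) := by
  refine ⟨fun σ hσ => Gker_integrable hσ t, fun σ₁ h₁ σ₂ h₂ => ?_⟩
  unfold G
  rcases le_total σ₁ σ₂ with h | h
  · rw [integral_shift t h₁ h₂ h]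
  · rw [integral_shift t h₂ h₁ h]
end
end

section
/- Fix σ ∈ (1/2, 2). For every σ' ∈ (1/2, 2), there exist constants C > 0, K > 0 and t₀ > 0 such that for all real t ≥ t₀, setting b = C·log t, one has |G_σ(t) − (1/(2πi)) ∫_{−b}^{b} (t/(2π))^{i(s−iσ')/2} · ζ(1/2 + σ' + i(t+s)) · π/(2 sinh(π(s−iσ')/2)) ds| ≤ K·t^{−2}. -/
open Complex MeasureTheory Real Set

noncomputable section

namespace Stmt8Aux

/-- auxiliary kernel as function of a complex variable -/
def Fk (t : ℝ) (w : ℂ) : ℂ :=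
  Complex.exp (Complex.I * w / 2 * Real.log (t / (2 * π))) *
    riemannZeta (1/2 + Complex.I * t + Complex.I * w) *
    ((π : ℂ) / (2 * Complex.sinh ((π : ℂ) * w / 2)))

lemma zeta_bound {a : ℝ} (ha : 1 < a) {z : ℂ} (hz : a ≤ z.re) :
    ‖riemannZeta z‖ ≤ ∑' n : ℕ, 1 / ((n : ℝ) + 1) ^ a := by
  have hz1 : 1 < z.re := lt_of_lt_of_le ha hz
  rw [zeta_eq_tsum_one_div_nat_add_one_cpow hz1]
  have hsum : Summable (fun n : ℕ => 1 / ((n : ℝ) + 1) ^ a) := by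
    have h0 := Real.summable_one_div_nat_rpow.mpr ha
    have := (summable_nat_add_iff (f := fun n : ℕ => 1 / (n : ℝ) ^ a) 1).mpr h0
    refine this.congr fun n => ?_
    push_cast
    norm_num
  refine tsum_of_norm_bounded hsum.hasSum fun n => ?_
  have h1 : ((n : ℂ) + 1) = (((n + 1 : ℕ) : ℂ)) := by push_cast; ring
  rw [h1, norm_div, norm_one, norm_natCast_cpow_of_pos (Nat.succ_pos n)]
  have hbase : (1 : ℝ) ≤ ((n + 1 : ℕ) : ℝ) := by exact_mod_cast Nat.succ_le_succ (Nat.zero_le n)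
  have : ((n + 1 : ℕ) : ℝ) ^ a ≤ ((n + 1 : ℕ) : ℝ) ^ z.re :=
    Real.rpow_le_rpow_of_exponent_le hbase hz
  have hpos : (0:ℝ) < ((n + 1 : ℕ) : ℝ) ^ a := Real.rpow_pos_of_pos (by positivity) _
  rw [div_le_div_iff₀ (by positivity) (by positivity)] at *
  calc 1 * ((n:ℝ)+1) ^ a = ((n+1:ℕ):ℝ) ^ a := by push_cast; ring
    _ ≤ ((n+1:ℕ):ℝ) ^ z.re := this
    _ = 1 * ((n+1:ℕ):ℝ) ^ z.re := by ring

lemma norm_sinh_ge (w : ℂ) : Real.sinh |w.re| ≤ ‖Complex.sinh w‖ := by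
  have key : ∀ v : ℂ, 0 ≤ v.re → Real.sinh v.re ≤ ‖Complex.sinh v‖ := by
    intro v hv
    have h1 : Real.sinh v.re = (Real.exp v.re - Real.exp (-v.re)) / 2 := by
      rw [Real.sinh_eq]
    have h2 : Complex.sinh v = (Complex.exp v - Complex.exp (-v)) / 2 := rfl
    rw [h1, h2]
    have h3 : Real.exp v.re - Real.exp (-v.re)
        ≤ ‖Complex.exp v - Complex.exp (-v)‖ := by
      have := norm_sub_norm_le (Complex.exp v) (Complex.exp (-v))
      rw [Complex.norm_exp, Complex.norm_exp,
        Complex.neg_re] at this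
      linarith [this, norm_sub_norm_le (Complex.exp v) (Complex.exp (-v))]
    rw [norm_div]
    rw [show ‖(2:ℂ)‖ = (2:ℝ) by norm_num]
    linarith
  rcases le_or_gt 0 w.re with h | h
  · rw [_root_.abs_of_nonneg h]; exact key w h
  · have := key (-w) (by simp [Complex.neg_re]; linarith)
    rw [_root_.abs_of_neg h]
    simpa [Complex.sinh_neg, Complex.neg_re] using this

lemma exp_quarter_le_sinh {x : ℝ} (hx : 1 ≤ x) : Real.exp x / 4 ≤ Real.sinh x := by
  rw [Real.sinh_eq]
  have h2 : (2:ℝ) ≤ Real.exp x := by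
    calc (2:ℝ) = 1 + 1 := by norm_num
      _ ≤ 1 + x := by linarith
      _ ≤ Real.exp x := Real.add_one_le_exp x |>.trans_eq' (by ring)
  have h3 : Real.exp (-x) ≤ 1 := Real.exp_le_one_iff.mpr (by linarith)
  have h4 : (1:ℝ) ≤ Real.exp x / 2 := by linarith
  linarith

lemma sinh_ne_zero_strip {w : ℂ} (h1 : -π < w.im) (h2 : w.im < 0) :
    Complex.sinh w ≠ 0 := by
  intro h
  have hs : Complex.sin (w * Complex.I) = 0 := by
    rw [Complex.sin_mul_I, h, zero_mul]
  obtain ⟨k, hk⟩ := Complex.sin_eq_zero_iff.mp hs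
  have hre := congrArg Complex.re hk
  rw [Complex.mul_I_re] at hre
  have hre' : -w.im = (k : ℝ) * π := by
    simpa using hre
  have hπ := Real.pi_pos
  have hk0 : (0:ℝ) < (k:ℝ) := by
    by_contra hc
    push_neg at hc
    nlinarith
  have hk1 : (k:ℝ) < 1 := by nlinarith
  have hA : (0:ℤ) < k := by exact_mod_cast hk0
  have hB : (k:ℤ) < 1 := by exact_mod_cast hk1
  omega


lemma reAux {t : ℝ} (w : ℂ) : (1/2 + Complex.I * (t:ℂ) + Complex.I * w).re = 1/2 - w.im := by
  simp; try ring

lemma Fk_diff {t : ℝ} {w : ℂ} (h1 : -2 < w.im) (h2 : w.im < -(1/2)) :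
    DifferentiableAt ℂ (Fk t) w := by
  have hπ := Real.pi_pos
  have hz : (1/2 + Complex.I * (t:ℂ) + Complex.I * w) ≠ 1 := by
    intro h
    have := congrArg Complex.re h
    rw [reAux, Complex.one_re] at this
    linarith
  have hs : Complex.sinh ((π:ℂ) * w / 2) ≠ 0 := by
    apply sinh_ne_zero_strip
    · have him : ((π:ℂ) * w / 2).im = π * w.im / 2 := by simp; try ring
      rw [him]; nlinarith
    · have him : ((π:ℂ) * w / 2).im = π * w.im / 2 := by simp; try ring
      rw [him]; nlinarith
  have d1 : DifferentiableAt ℂ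
      (fun z : ℂ => Complex.exp (Complex.I * z / 2 * Real.log (t / (2 * π)))) w := by
    apply DifferentiableAt.cexp
    fun_prop
  have d2 : DifferentiableAt ℂ
      (fun z : ℂ => riemannZeta (1/2 + Complex.I * (t:ℂ) + Complex.I * z)) w := by
    have da : DifferentiableAt ℂ (fun z : ℂ => 1/2 + Complex.I * (t:ℂ) + Complex.I * z) w := by
      fun_prop
    exact (differentiableAt_riemannZeta hz).comp w da
  have d3 : DifferentiableAt ℂ
      (fun z : ℂ => (π : ℂ) / (2 * Complex.sinh ((π:ℂ) * z / 2))) w := by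
    apply DifferentiableAt.div (differentiableAt_const _)
    · fun_prop
    · exact mul_ne_zero two_ne_zero hs
  exact (d1.mul d2).mul d3

lemma Gker_eq (σ'' t s : ℝ) : Gker σ'' t s = Fk t ((s:ℂ) - Complex.I * σ'') := by
  have hI : Complex.I * ((s:ℂ) - Complex.I * σ'') = Complex.I * s + σ'' := by
    rw [mul_sub, ← mul_assoc, Complex.I_mul_I]; ring
  have h1 : (1/2 + (σ'':ℂ) + Complex.I * ((t:ℂ) + s))
      = 1/2 + Complex.I * (t:ℂ) + Complex.I * ((s:ℂ) - Complex.I * σ'') := by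
    rw [hI]; ring
  rw [Gker, Fk, h1]

lemma Gker_continuous {σ'' t : ℝ} (h1 : 1/2 < σ'') (h2 : σ'' < 2) :
    Continuous (Gker σ'' t) := by
  rw [continuous_iff_continuousAt]
  intro s
  have hmap : Continuous (fun s : ℝ => (s:ℂ) - Complex.I * σ'') := by fun_prop
  have hd : DifferentiableAt ℂ (Fk t) ((s:ℂ) - Complex.I * σ'') := by
    apply Fk_diff <;> simp <;> linarith
  have : ContinuousAt (fun x : ℝ => Fk t ((x:ℂ) - Complex.I * σ'')) s := by
    exact ContinuousAt.comp (g := Fk t) (f := fun x : ℝ => (x:ℂ) - Complex.I * σ'')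
      (x := s) hd.continuousAt hmap.continuousAt
  simpa only [← Gker_eq] using this

lemma Fk_bound {a t : ℝ} (ha1 : 1/2 < a) (ht : 1 ≤ t) {w : ℂ}
    (h1 : -2 ≤ w.im) (h2 : w.im ≤ -a) (h3 : 1 ≤ |w.re|) :
    ‖Fk t w‖ ≤ 2 * π * (∑' n : ℕ, 1 / ((n:ℝ)+1) ^ (1/2 + a)) * t
      * Real.exp (-(π/2) * |w.re|) := by
  have hπ := Real.pi_pos
  have hπ3 := Real.pi_gt_three
  set M := ∑' n : ℕ, 1 / ((n:ℝ)+1) ^ (1/2 + a) with hM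
  have hM0 : 0 ≤ M := tsum_nonneg fun n => by positivity
  set L := Real.log (t / (2 * π)) with hL
  -- bound on the exponential factor
  have hexp : ‖Complex.exp (Complex.I * w / 2 * (L:ℂ))‖ ≤ t := by
    rw [Complex.norm_exp]
    have hre : (Complex.I * w / 2 * (L:ℂ)).re = -w.im / 2 * L := by
      simp [Complex.mul_re, Complex.div_re]
      try ring
    rw [hre]
    rcases le_or_gt 0 L with hL0 | hL0
    · have hle : -w.im / 2 * L ≤ L := by nlinarith
      calc Real.exp (-w.im / 2 * L) ≤ Real.exp L := Real.exp_le_exp.mpr hle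
        _ = t / (2 * π) := Real.exp_log (by positivity)
        _ ≤ t := by
            rw [div_le_iff₀ (by positivity)]
            nlinarith
    · have hle : -w.im / 2 * L ≤ 0 := by nlinarith
      calc Real.exp (-w.im / 2 * L) ≤ Real.exp 0 := Real.exp_le_exp.mpr hle
        _ = 1 := Real.exp_zero
        _ ≤ t := ht
  -- bound on the zeta factor
  have hzeta : ‖riemannZeta (1/2 + Complex.I * (t:ℂ) + Complex.I * w)‖ ≤ M := by
    apply zeta_bound (by linarith)
    rw [reAux]
    linarith
  -- bound on the sinh factor
  have hsinh : ‖(π : ℂ) / (2 * Complex.sinh ((π:ℂ) * w / 2))‖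
      ≤ 2 * π * Real.exp (-(π/2) * |w.re|) := by
    have hre : ((π:ℂ) * w / 2).re = π * w.re / 2 := by
      simp [Complex.mul_re, Complex.div_re]
      try ring
    have habs : |((π:ℂ) * w / 2).re| = π / 2 * |w.re| := by
      rw [hre, abs_div, abs_mul, _root_.abs_of_nonneg hπ.le]
      rw [show |(2:ℝ)| = 2 by norm_num]
      ring
    have hlow : Real.exp (π / 2 * |w.re|) / 4 ≤ ‖Complex.sinh ((π:ℂ) * w / 2)‖ := by
      calc Real.exp (π / 2 * |w.re|) / 4
          ≤ Real.sinh (π / 2 * |w.re|) := exp_quarter_le_sinh (by nlinarith)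
        _ = Real.sinh |((π:ℂ) * w / 2).re| := by rw [habs]
        _ ≤ ‖Complex.sinh ((π:ℂ) * w / 2)‖ := norm_sinh_ge _
    have hpos : (0:ℝ) < Real.exp (π / 2 * |w.re|) / 4 := by positivity
    rw [norm_div, norm_mul]
    rw [show ‖(π:ℂ)‖ = π by simp [Complex.norm_real, Real.norm_eq_abs,
      _root_.abs_of_nonneg hπ.le] ]
    rw [show ‖(2:ℂ)‖ = (2:ℝ) by norm_num]
    calc π / (2 * ‖Complex.sinh ((π:ℂ) * w / 2)‖)
        ≤ π / (2 * (Real.exp (π / 2 * |w.re|) / 4)) := by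
          apply div_le_div_of_nonneg_left hπ.le (by positivity)
          nlinarith [hlow]
      _ = 2 * π * Real.exp (-(π/2) * |w.re|) := by
          rw [show (-(π/2) * |w.re|) = -(π/2 * |w.re|) by ring, Real.exp_neg]
          field_simp
          ring
  calc ‖Fk t w‖
      = ‖Complex.exp (Complex.I * w / 2 * (L:ℂ))‖
        * ‖riemannZeta (1/2 + Complex.I * (t:ℂ) + Complex.I * w)‖
        * ‖(π : ℂ) / (2 * Complex.sinh ((π:ℂ) * w / 2))‖ := by
        rw [Fk, norm_mul, norm_mul]
    _ ≤ t * M * (2 * π * Real.exp (-(π/2) * |w.re|)) := by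
        apply mul_le_mul (mul_le_mul hexp hzeta (norm_nonneg _) (by linarith)) hsinh
          (norm_nonneg _) (by positivity)
    _ = 2 * π * M * t * Real.exp (-(π/2) * |w.re|) := by ring


lemma wre (s σ₀ : ℝ) : ((s:ℂ) - Complex.I * σ₀).re = s := by simp

lemma wim (s σ₀ : ℝ) : ((s:ℂ) - Complex.I * σ₀).im = -σ₀ := by simp

lemma integral_exp_neg_mul_Ioi {c b : ℝ} (hc : 0 < c) :
    ∫ x in Ioi b, Real.exp (-c * x) = Real.exp (-c * b) / c := by
  have hd : ∀ x ∈ Ici b, HasDerivAt (fun y => -Real.exp (-c * y) / c)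
      (Real.exp (-c * x)) x := by
    intro x _
    simpa [hc.ne'] using ((hasDerivAt_id x).const_mul (-c)).exp.neg.div_const c
  have hi : IntegrableOn (fun x => Real.exp (-c * x)) (Ioi b) := exp_neg_integrableOn_Ioi b hc
  have hlim : Filter.Tendsto (fun y => -Real.exp (-c * y) / c) Filter.atTop (nhds 0) := by
    have h1 : Filter.Tendsto (fun y : ℝ => -c * y) Filter.atTop Filter.atBot :=
      Filter.tendsto_id.const_mul_atTop_of_neg (neg_neg_iff_pos.2 hc)
    have h2 := (Real.tendsto_exp_atBot.comp h1).neg.div_const c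
    simpa using h2
  rw [MeasureTheory.integral_Ioi_of_hasDerivAt_of_tendsto' hd hi hlim]
  ring

lemma exp_mul_integrableOn_Iic {c a : ℝ} (hc : 0 < c) :
    IntegrableOn (fun x : ℝ => Real.exp (c * x)) (Iic a) := by
  rw [← Measure.map_neg_eq_self (volume : Measure ℝ)]
  have m : MeasurableEmbedding fun x : ℝ => -x := (Homeomorph.neg ℝ).measurableEmbedding
  rw [m.integrableOn_map_iff]
  simp_rw [Function.comp_def, neg_preimage, neg_Iic]
  refine Iff.mpr integrableOn_Ici_iff_integrableOn_Ioi
    ((exp_neg_integrableOn_Ioi (-a) hc).congr_fun (fun x _ => ?_) measurableSet_Ioi)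
  exact congrArg Real.exp (by ring)

lemma integral_exp_mul_Iic {c a : ℝ} (hc : 0 < c) :
    ∫ x in Iic a, Real.exp (c * x) = Real.exp (c * a) / c := by
  have h2 := integral_comp_neg_Ioi (-a) (fun y => Real.exp (c * y))
  rw [neg_neg] at h2
  rw [← h2]
  have h3 : (∫ x in Ioi (-a), Real.exp (c * -x)) = ∫ x in Ioi (-a), Real.exp (-c * x) := by
    refine setIntegral_congr_fun measurableSet_Ioi fun x _ => congrArg Real.exp (by ring)
  calc (∫ x in Ioi (-a), Real.exp (c * -x)) = ∫ x in Ioi (-a), Real.exp (-c * x) := h3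
    _ = Real.exp (-c * -a) / c := integral_exp_neg_mul_Ioi hc
    _ = Real.exp (c * a) / c := by rw [show -c * -a = c * a by ring]

lemma integrable_exp_neg_abs {c : ℝ} (hc : 0 < c) :
    Integrable (fun s : ℝ => Real.exp (-c * |s|)) := by
  rw [← integrableOn_univ, ← Iic_union_Ioi (a := (0:ℝ))]
  apply IntegrableOn.union
  · refine (exp_mul_integrableOn_Iic hc (a := 0)).congr_fun (fun x hx => ?_) measurableSet_Iic
    rw [abs_of_nonpos hx]
    exact congrArg Real.exp (by ring)
  · refine (exp_neg_integrableOn_Ioi 0 hc).congr_fun (fun x hx => ?_) measurableSet_Ioi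
    rw [abs_of_pos hx]

lemma Gker_integrable {σ'' t : ℝ} (h1 : 1/2 < σ'') (h2 : σ'' < 2) (ht : 1 ≤ t) :
    Integrable (Gker σ'' t) := by
  have hπ := Real.pi_pos
  have hc := Gker_continuous (t := t) h1 h2
  obtain ⟨B₀, hB₀⟩ := (isCompact_Icc (a := (-1:ℝ)) (b := 1)).exists_bound_of_continuousOn
    hc.continuousOn
  set M := ∑' n : ℕ, 1 / ((n:ℝ)+1) ^ (1/2 + σ'') with hM
  have hM0 : 0 ≤ M := tsum_nonneg fun n => by positivity
  set D := max (max B₀ 0 * Real.exp (π/2)) (2 * π * M * t) with hD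
  have hD0 : 0 ≤ D := le_trans (by positivity) (le_max_right _ _)
  apply Integrable.mono' ((integrable_exp_neg_abs (by positivity : (0:ℝ) < π/2)).const_mul D)
    hc.aestronglyMeasurable
  filter_upwards with s
  show ‖Gker σ'' t s‖ ≤ D * Real.exp (-(π/2) * |s|)
  rcases le_or_gt |s| 1 with hs | hs
  · obtain ⟨hs1, hs2⟩ := abs_le.mp hs
    have hb1 : ‖Gker σ'' t s‖ ≤ max B₀ 0 := le_trans (hB₀ s ⟨hs1, hs2⟩) (le_max_left _ _)
    calc ‖Gker σ'' t s‖ ≤ max B₀ 0 := hb1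
      _ = max B₀ 0 * Real.exp (π/2) * Real.exp (-(π/2)) := by
          rw [mul_assoc, ← Real.exp_add]; norm_num
      _ ≤ D * Real.exp (-(π/2) * |s|) := by
          apply mul_le_mul (le_max_left _ _) (Real.exp_le_exp.mpr (by nlinarith))
            (Real.exp_pos _).le hD0
  · rw [Gker_eq]
    have hw := Fk_bound (a := σ'') h1 ht (w := (s:ℂ) - Complex.I * σ'')
      (by simp; linarith) (by simp) (by simp; linarith)
    calc ‖Fk t ((s:ℂ) - Complex.I * σ'')‖
        ≤ 2 * π * M * t * Real.exp (-(π/2) * |((s:ℂ) - Complex.I * σ'').re|) := hw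
      _ ≤ D * Real.exp (-(π/2) * |s|) := by
          apply mul_le_mul (le_max_right _ _) (le_of_eq (by norm_num))
            (Real.exp_pos _).le hD0

lemma tail_Ioi {aa σ₀ t b : ℝ} (ha : 1/2 < aa) (haσ : aa ≤ σ₀) (hσb : σ₀ < 2) (ht : 1 ≤ t)
    (hb : 1 ≤ b) :
    ‖∫ s in Ioi b, Gker σ₀ t s‖
      ≤ 2 * π * (∑' n : ℕ, 1 / ((n:ℝ)+1) ^ (1/2 + aa)) * t * (Real.exp (-(π/2) * b) / (π/2)) := by
  have hπ := Real.pi_pos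
  set M := ∑' n : ℕ, 1 / ((n:ℝ)+1) ^ (1/2 + aa) with hM
  set A := 2 * π * M * t with hA
  have hint : Integrable (Gker σ₀ t) := Gker_integrable (lt_of_lt_of_le ha haσ) hσb ht
  calc ‖∫ s in Ioi b, Gker σ₀ t s‖ ≤ ∫ s in Ioi b, ‖Gker σ₀ t s‖ :=
        norm_integral_le_integral_norm _
    _ ≤ ∫ s in Ioi b, A * Real.exp (-(π/2) * s) := by
        apply setIntegral_mono_on hint.norm.integrableOn
          ((exp_neg_integrableOn_Ioi b (by positivity)).const_mul A) measurableSet_Ioi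
        intro s hs
        have hs1 : (1:ℝ) ≤ s := le_trans hb (le_of_lt hs)
        rw [Gker_eq]
        have hw := Fk_bound (a := aa) ha ht (w := (s:ℂ) - Complex.I * σ₀)
          (by rw [wim]; linarith) (by rw [wim]; linarith)
          (by rw [wre, _root_.abs_of_nonneg (by linarith : (0:ℝ) ≤ s)]; exact hs1)
        rw [wre, _root_.abs_of_nonneg (by linarith : (0:ℝ) ≤ s)] at hw
        exact hw
    _ = A * (Real.exp (-(π/2) * b) / (π/2)) := by
        rw [MeasureTheory.integral_const_mul, integral_exp_neg_mul_Ioi (by positivity)]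

lemma tail_Iic {aa σ₀ t b : ℝ} (ha : 1/2 < aa) (haσ : aa ≤ σ₀) (hσb : σ₀ < 2) (ht : 1 ≤ t)
    (hb : 1 ≤ b) :
    ‖∫ s in Iic (-b), Gker σ₀ t s‖
      ≤ 2 * π * (∑' n : ℕ, 1 / ((n:ℝ)+1) ^ (1/2 + aa)) * t * (Real.exp (-(π/2) * b) / (π/2)) := by
  have hπ := Real.pi_pos
  set M := ∑' n : ℕ, 1 / ((n:ℝ)+1) ^ (1/2 + aa) with hM
  set A := 2 * π * M * t with hA
  have hint : Integrable (Gker σ₀ t) := Gker_integrable (lt_of_lt_of_le ha haσ) hσb ht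
  calc ‖∫ s in Iic (-b), Gker σ₀ t s‖ ≤ ∫ s in Iic (-b), ‖Gker σ₀ t s‖ :=
        norm_integral_le_integral_norm _
    _ ≤ ∫ s in Iic (-b), A * Real.exp ((π/2) * s) := by
        apply setIntegral_mono_on hint.norm.integrableOn
          ((exp_mul_integrableOn_Iic (by positivity)).const_mul A) measurableSet_Iic
        intro s hs
        have hs1 : s ≤ -1 := le_trans hs (by linarith)
        rw [Gker_eq]
        have hw := Fk_bound (a := aa) ha ht (w := (s:ℂ) - Complex.I * σ₀)
          (by rw [wim]; linarith) (by rw [wim]; linarith)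
          (by rw [wre, _root_.abs_of_nonpos (by linarith : s ≤ (0:ℝ))]; linarith)
        rw [wre, _root_.abs_of_nonpos (by linarith : s ≤ (0:ℝ)),
          show -(π/2) * -s = (π/2) * s by ring] at hw
        exact hw
    _ = A * (Real.exp (-(π/2) * b) / (π/2)) := by
        rw [MeasureTheory.integral_const_mul, integral_exp_mul_Iic (by positivity)]
        rw [show (π/2) * (-b) = -(π/2) * b by ring]

end Stmt8Aux

set_option maxHeartbeats 1600000 in
theorem stmt_8 (σ : ℝ) (hσ : σ ∈ Ioo (1/2 : ℝ) 2) (σ' : ℝ) (hσ' : σ' ∈ Ioo (1/2 : ℝ) 2) :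
    ∃ C > (0 : ℝ), ∃ K > (0 : ℝ), ∃ t₀ > (0 : ℝ), ∀ t : ℝ, t₀ ≤ t →
      ‖G σ t - (2 * (π : ℂ) * Complex.I)⁻¹ *
          ∫ s in (-(C * Real.log t))..(C * Real.log t), Gker σ' t s‖
        ≤ K * t ^ (-(2 : ℝ)) := by
  obtain ⟨hσ1, hσ2⟩ := hσ
  obtain ⟨hσ'1, hσ'2⟩ := hσ'
  have hπ := Real.pi_pos
  have hπ3 := Real.pi_gt_three
  set aa := min σ σ' with haa
  have haa1 : 1/2 < aa := lt_min hσ1 hσ'1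
  set M := ∑' n : ℕ, 1 / ((n:ℝ)+1) ^ (1/2 + aa) with hMdef
  have hM1 : (1:ℝ) ≤ M := by
    have hsum : Summable (fun n : ℕ => 1 / ((n : ℝ) + 1) ^ (1/2+aa)) := by
      have h0 := Real.summable_one_div_nat_rpow.mpr (show (1:ℝ) < 1/2+aa by linarith)
      have h1 := (summable_nat_add_iff (f := fun n : ℕ => 1 / (n : ℝ) ^ (1/2+aa)) 1).mpr h0
      refine h1.congr fun n => ?_
      push_cast
      norm_num
    have h0 : (fun n : ℕ => 1 / ((n : ℝ) + 1) ^ (1/2+aa)) 0 = 1 := by norm_num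
    calc (1:ℝ) = (fun n : ℕ => 1 / ((n : ℝ) + 1) ^ (1/2+aa)) 0 := h0.symm
      _ ≤ M := Summable.le_tsum hsum 0 fun i _ => by positivity
  have hM0 : (0:ℝ) < M := lt_of_lt_of_le one_pos hM1
  refine ⟨2, by norm_num, 12 * π * M, by positivity, 10, by norm_num, ?_⟩
  intro t ht10
  have ht1 : (1:ℝ) ≤ t := by linarith
  have ht0 : (0:ℝ) < t := by linarith
  set b := 2 * Real.log t with hbdef
  have hlog : (1:ℝ) < Real.log 10 := by
    rw [Real.lt_log_iff_exp_lt (by norm_num)]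
    calc Real.exp 1 < 2.7182818286 := Real.exp_one_lt_d9
      _ < 10 := by norm_num
  have hb1 : (1:ℝ) ≤ b := by
    have hlt := Real.log_le_log (by norm_num : (0:ℝ) < 10) ht10
    rw [hbdef]
    nlinarith
  have hble : -b ≤ b := by linarith
  set P := ∫ s in Iic (-b), Gker σ t s with hP
  set R := ∫ s in Ioi b, Gker σ t s with hR
  set Q := ∫ s in Ioc (-b) b, Gker σ t s with hQ
  set Tσ := ∫ s in (-b)..b, Gker σ t s with hTσ
  set Tσ' := ∫ s in (-b)..b, Gker σ' t s with hTσ'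
  set Vr := ∫ y in (-σ:ℝ)..(-σ':ℝ), Stmt8Aux.Fk t (((b:ℝ):ℂ) + (y:ℂ) * Complex.I) with hVr
  set Vl := ∫ y in (-σ:ℝ)..(-σ':ℝ), Stmt8Aux.Fk t (((-b:ℝ):ℂ) + (y:ℂ) * Complex.I) with hVl
  have hint : Integrable (Gker σ t) := Stmt8Aux.Gker_integrable hσ1 hσ2 ht1
  have hsplit : (∫ s : ℝ, Gker σ t s) = P + (Q + R) := by
    rw [hP, hQ, hR]
    rw [← intervalIntegral.integral_Iic_add_Ioi (b := -b) hint.integrableOn hint.integrableOn]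
    congr 1
    rw [← setIntegral_union (Ioc_disjoint_Ioi le_rfl) measurableSet_Ioi hint.integrableOn
      hint.integrableOn, Ioc_union_Ioi_eq_Ioi hble]
  have htr : Tσ = Q := intervalIntegral.integral_of_le hble
  have Hd : DifferentiableOn ℂ (Stmt8Aux.Fk t) (Set.uIcc (-b:ℝ) b ×ℂ Set.uIcc (-σ:ℝ) (-σ')) := by
    intro w hw
    rw [Complex.mem_reProdIm] at hw
    have h2 := hw.2
    rw [Set.mem_uIcc] at h2
    have hA2 : -2 < w.im ∧ w.im < -(1/2) := by
      rcases h2 with ⟨u, v⟩ | ⟨u, v⟩ <;> exact ⟨by linarith, by linarith⟩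
    exact (Stmt8Aux.Fk_diff hA2.1 hA2.2).differentiableWithinAt
  have h1 : (∫ x in (-b)..b, Stmt8Aux.Fk t ((x:ℂ) + ((-σ:ℝ):ℂ) * Complex.I)) = Tσ := by
    rw [hTσ]
    apply intervalIntegral.integral_congr
    intro x hx
    rw [Stmt8Aux.Gker_eq]
    exact congrArg (Stmt8Aux.Fk t) (by push_cast; ring)
  have h2 : (∫ x in (-b)..b, Stmt8Aux.Fk t ((x:ℂ) + ((-σ':ℝ):ℂ) * Complex.I)) = Tσ' := by
    rw [hTσ']
    apply intervalIntegral.integral_congr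
    intro x hx
    rw [Stmt8Aux.Gker_eq]
    exact congrArg (Stmt8Aux.Fk t) (by push_cast; ring)
  have H : (∫ x in (-b)..b, Stmt8Aux.Fk t ((x:ℂ) + ((-σ:ℝ):ℂ) * Complex.I))
      - (∫ x in (-b)..b, Stmt8Aux.Fk t ((x:ℂ) + ((-σ':ℝ):ℂ) * Complex.I))
      + Complex.I • Vr - Complex.I • Vl = 0 :=
    Complex.integral_boundary_rect_eq_zero_of_differentiableOn (Stmt8Aux.Fk t)
      ⟨-b, -σ⟩ ⟨b, -σ'⟩ Hd
  rw [h1, h2, smul_eq_mul, smul_eq_mul] at H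
  have hkey : (∫ s : ℝ, Gker σ t s) - Tσ'
      = P + R + (Complex.I * Vl - Complex.I * Vr) := by
    linear_combination hsplit + H - htr
  -- bounds
  have hPb : ‖P‖ ≤ 2 * π * M * t * (Real.exp (-(π/2) * b) / (π/2)) :=
    Stmt8Aux.tail_Iic haa1 (min_le_left σ σ') hσ2 ht1 hb1
  have hRb : ‖R‖ ≤ 2 * π * M * t * (Real.exp (-(π/2) * b) / (π/2)) :=
    Stmt8Aux.tail_Ioi haa1 (min_le_left σ σ') hσ2 ht1 hb1
  have hvert : ∀ c : ℝ, |c| = b →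
      ‖∫ y in (-σ:ℝ)..(-σ':ℝ), Stmt8Aux.Fk t ((c:ℂ) + (y:ℂ) * Complex.I)‖
        ≤ 2 * π * M * t * Real.exp (-(π/2) * b) * 2 := by
    intro c hc
    have hb' : ∀ y ∈ Set.uIoc (-σ:ℝ) (-σ':ℝ),
        ‖Stmt8Aux.Fk t ((c:ℂ) + (y:ℂ) * Complex.I)‖
          ≤ 2 * π * M * t * Real.exp (-(π/2) * b) := by
      intro y hy
      have hy2 : -2 ≤ y ∧ y ≤ -aa := by
        have h1' := min_le_left σ σ'
        have h2' := min_le_right σ σ'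
        rcases Set.mem_uIoc.mp hy with ⟨u, v⟩ | ⟨u, v⟩ <;>
          exact ⟨by rw [haa] at *; linarith, by rw [haa] at *; linarith⟩
      have hwim : ((c:ℂ) + (y:ℂ) * Complex.I).im = y := by simp
      have hwre : ((c:ℂ) + (y:ℂ) * Complex.I).re = c := by simp
      have hw := Stmt8Aux.Fk_bound (a := aa) haa1 ht1 (w := (c:ℂ) + (y:ℂ) * Complex.I)
        (by rw [hwim]; exact hy2.1) (by rw [hwim]; exact hy2.2)
        (by rw [hwre, hc]; exact hb1)
      rw [hwre, hc] at hw
      exact hw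
    have hle := intervalIntegral.norm_integral_le_of_norm_le_const hb'
    have habs : |(-σ':ℝ) - (-σ:ℝ)| ≤ 2 := by
      rw [abs_le]
      constructor <;> linarith
    calc ‖∫ y in (-σ:ℝ)..(-σ':ℝ), Stmt8Aux.Fk t ((c:ℂ) + (y:ℂ) * Complex.I)‖
        ≤ 2 * π * M * t * Real.exp (-(π/2) * b) * |(-σ':ℝ) - (-σ:ℝ)| := hle
      _ ≤ 2 * π * M * t * Real.exp (-(π/2) * b) * 2 := by
          have hp : (0:ℝ) ≤ 2 * π * M * t * Real.exp (-(π/2) * b) := by positivity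
          exact mul_le_mul_of_nonneg_left habs hp
  have hVlb : ‖Vl‖ ≤ 2 * π * M * t * Real.exp (-(π/2) * b) * 2 := by
    have := hvert (-b) (by rw [abs_neg, _root_.abs_of_nonneg (by linarith : (0:ℝ) ≤ b)])
    rw [hVl]
    exact this
  have hVrb : ‖Vr‖ ≤ 2 * π * M * t * Real.exp (-(π/2) * b) * 2 := by
    have := hvert b (by rw [_root_.abs_of_nonneg (by linarith : (0:ℝ) ≤ b)])
    rw [hVr]
    exact this
  have hnorminv : ‖(2 * (π:ℂ) * Complex.I)⁻¹‖ ≤ 1 := by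
    rw [norm_inv, norm_mul, norm_mul, Complex.norm_I, mul_one]
    rw [show ‖(2:ℂ)‖ = (2:ℝ) by norm_num]
    rw [show ‖((π:ℝ):ℂ)‖ = π by
      simp [Complex.norm_real, Real.norm_eq_abs, _root_.abs_of_pos hπ] ]
    rw [inv_le_one_iff₀]
    right
    linarith
  have hfactor : G σ t - (2 * (π:ℂ) * Complex.I)⁻¹ * Tσ'
      = (2 * (π:ℂ) * Complex.I)⁻¹ * ((∫ s : ℝ, Gker σ t s) - Tσ') := by
    rw [G, mul_sub]
  have hexp : Real.exp (-(π/2) * b) = t ^ (-π : ℝ) := by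
    rw [Real.rpow_def_of_pos ht0, hbdef]
    congr 1
    ring
  have hrp : t * t ^ (-π:ℝ) = t ^ (1-π:ℝ) := by
    rw [show (1-π:ℝ) = 1 + (-π) by ring, Real.rpow_add ht0, Real.rpow_one]
  have hle2 : t ^ (1-π:ℝ) ≤ t ^ (-(2:ℝ)) :=
    Real.rpow_le_rpow_of_exponent_le ht1 (by nlinarith)
  calc ‖G σ t - (2 * (π:ℂ) * Complex.I)⁻¹ * Tσ'‖
      = ‖(2 * (π:ℂ) * Complex.I)⁻¹‖ * ‖(∫ s : ℝ, Gker σ t s) - Tσ'‖ := by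
        rw [hfactor, norm_mul]
    _ ≤ 1 * ‖(∫ s : ℝ, Gker σ t s) - Tσ'‖ :=
        mul_le_mul_of_nonneg_right hnorminv (norm_nonneg _)
    _ = ‖P + R + (Complex.I * Vl - Complex.I * Vr)‖ := by rw [one_mul, hkey]
    _ ≤ ‖P‖ + ‖R‖ + (‖Vl‖ + ‖Vr‖) := by
        calc ‖P + R + (Complex.I * Vl - Complex.I * Vr)‖
            ≤ ‖P + R‖ + ‖Complex.I * Vl - Complex.I * Vr‖ := norm_add_le _ _
          _ ≤ (‖P‖ + ‖R‖) + (‖Complex.I * Vl‖ + ‖Complex.I * Vr‖) :=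
              add_le_add (norm_add_le _ _) (norm_sub_le _ _)
          _ = ‖P‖ + ‖R‖ + (‖Vl‖ + ‖Vr‖) := by
              rw [norm_mul, norm_mul, Complex.norm_I, one_mul, one_mul]
    _ ≤ (2 * π * M * t * (Real.exp (-(π/2) * b) / (π/2))
          + 2 * π * M * t * (Real.exp (-(π/2) * b) / (π/2)))
        + (2 * π * M * t * Real.exp (-(π/2) * b) * 2
          + 2 * π * M * t * Real.exp (-(π/2) * b) * 2) :=
        add_le_add (add_le_add hPb hRb) (add_le_add hVlb hVrb)
    _ ≤ 12 * π * M * (t * Real.exp (-(π/2) * b)) := by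
        have hE : (0:ℝ) < Real.exp (-(π/2) * b) := Real.exp_pos _
        have key : 2 * π * M * t * (Real.exp (-(π/2) * b) / (π/2))
            = 4 * M * (t * Real.exp (-(π/2) * b)) := by
          field_simp
          ring
        rw [key]
        nlinarith [mul_nonneg (by nlinarith : (0:ℝ) ≤ 4*π - 8)
          (le_of_lt (mul_pos (mul_pos hM0 ht0) hE))]
    _ ≤ 12 * π * M * t ^ (-(2:ℝ)) := by
        have : t * Real.exp (-(π/2) * b) ≤ t ^ (-(2:ℝ)) := by
          rw [hexp, hrp]
          exact hle2
        exact mul_le_mul_of_nonneg_left this (by positivity)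
end
end

section
/- Let a > 0, σ > 0 and y be real numbers with σ·a < π. Then the function s ↦ (a/sinh(a(s−iσ)))·e^{i(s−iσ)y} is integrable over ℝ and (1/(2πi)) ∫_ℝ (a/sinh(a(s−iσ)))·e^{i(s−iσ)y} ds = e^{πy/a}/(1 + e^{πy/a}). -/
open Complex MeasureTheory Real Set

noncomputable section

namespace Stmt11Aux

open Filter

/-! ### Basic facts about `Complex.sinh` on horizontal lines -/

lemma sinh_expand (x t : ℝ) :
    Complex.sinh ((x : ℂ) + (t : ℂ) * Complex.I) =
      ((Real.sinh x * Real.cos t : ℝ) : ℂ) + ((Real.cosh x * Real.sin t : ℝ) : ℂ) * Complex.I := by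
  rw [Complex.sinh_add, Complex.sinh_mul_I, Complex.cosh_mul_I]
  push_cast [← Complex.ofReal_sinh, ← Complex.ofReal_cosh, ← Complex.ofReal_sin,
    ← Complex.ofReal_cos]
  ring

lemma normSq_sinh (x t : ℝ) :
    Complex.normSq (Complex.sinh ((x : ℂ) + (t : ℂ) * Complex.I)) =
      Real.sinh x ^ 2 + Real.sin t ^ 2 := by
  rw [sinh_expand, Complex.normSq_add_mul_I]
  nlinarith [Real.sin_sq_add_cos_sq t, Real.cosh_sq x]

lemma norm_sinh_sq (x t : ℝ) :
    ‖Complex.sinh ((x : ℂ) + (t : ℂ) * Complex.I)‖ ^ 2 = Real.sinh x ^ 2 + Real.sin t ^ 2 := by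
  rw [Complex.sq_norm, normSq_sinh]

lemma norm_sinh_ge_sin (x t : ℝ) :
    |Real.sin t| ≤ ‖Complex.sinh ((x : ℂ) + (t : ℂ) * Complex.I)‖ := by
  have h := norm_sinh_sq x t
  nlinarith [norm_nonneg (Complex.sinh ((x : ℂ) + (t : ℂ) * Complex.I)),
    _root_.sq_abs (Real.sin t), sq_nonneg (Real.sinh x), abs_nonneg (Real.sin t)]

lemma norm_sinh_ge_sinh (x t : ℝ) :
    |Real.sinh x| ≤ ‖Complex.sinh ((x : ℂ) + (t : ℂ) * Complex.I)‖ := by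
  have h := norm_sinh_sq x t
  nlinarith [norm_nonneg (Complex.sinh ((x : ℂ) + (t : ℂ) * Complex.I)),
    _root_.sq_abs (Real.sinh x), sq_nonneg (Real.sin t), abs_nonneg (Real.sinh x)]

lemma sinh_line_ne_zero {x t : ℝ} (ht : Real.sin t ≠ 0) :
    Complex.sinh ((x : ℂ) + (t : ℂ) * Complex.I) ≠ 0 := by
  intro h
  have h2 := norm_sinh_ge_sin x t
  rw [h, norm_zero] at h2
  exact ht (abs_nonpos_iff.mp h2)

lemma integrable_exp_neg_abs {b : ℝ} (hb : 0 < b) :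
    Integrable fun s : ℝ => Real.exp (-(b * |s|)) := by
  have key : IntegrableOn (fun s : ℝ => Real.exp (-(b * |s|))) (Ioi 0) := by
    refine (exp_neg_integrableOn_Ioi 0 hb).congr_fun (fun x hx => ?_) measurableSet_Ioi
    rw [abs_of_pos hx]; ring_nf
  have keyIio : IntegrableOn (fun s : ℝ => Real.exp (-(b * |s|))) (Iio 0) := by
    have hmp : MeasurePreserving (fun x : ℝ => -x) volume volume :=
      Measure.measurePreserving_neg _
    have hme : MeasurableEmbedding (fun x : ℝ => -x) :=
      (Homeomorph.neg ℝ).measurableEmbedding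
    have h2 := (hmp.integrableOn_comp_preimage hme).mpr key
    have heq : ((fun s : ℝ => Real.exp (-(b * |s|))) ∘ fun x : ℝ => -x) =
        fun s : ℝ => Real.exp (-(b * |s|)) := by
      funext s; simp [Function.comp, abs_neg]
    rw [heq] at h2
    convert h2 using 1
    ext x; simp [neg_pos]
  have h3 : IntegrableOn (fun s : ℝ => Real.exp (-(b * |s|))) (Iio 0 ∪ Ici 0) :=
    keyIio.union (key.congr_set_ae Ioi_ae_eq_Ici.symm)
  rwa [Iio_union_Ici, integrableOn_univ] at h3

lemma arg_expand (a τ : ℝ) (s : ℝ) :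
    (a : ℂ) * ((s : ℂ) - Complex.I * (τ : ℂ)) =
      ((a * s : ℝ) : ℂ) + ((-(a * τ) : ℝ) : ℂ) * Complex.I := by
  push_cast; ring

lemma exp_line_norm (τ y' : ℝ) (s : ℝ) :
    ‖Complex.exp (Complex.I * ((s : ℂ) - Complex.I * (τ : ℂ)) * (y' : ℂ))‖ =
      Real.exp (τ * y') := by
  have h : Complex.I * ((s : ℂ) - Complex.I * (τ : ℂ)) * (y' : ℂ) =
      ((τ * y' : ℝ) : ℂ) + ((s * y' : ℝ) : ℂ) * Complex.I := by
    apply Complex.ext <;>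
      simp [Complex.mul_re, Complex.mul_im, Complex.sub_re, Complex.sub_im] <;> ring
  rw [h, Complex.norm_exp]
  congr 1
  simp

lemma sinh_line_lower (a τ : ℝ) (ha : 0 < a) {m : ℝ} (hm : m = |Real.sin (a * τ)|)
    (hm0 : 0 < m) (s : ℝ) :
    min (1/4 : ℝ) (m/2) * Real.exp (a * |s|) ≤
      ‖Complex.sinh ((a : ℂ) * ((s : ℂ) - Complex.I * (τ : ℂ)))‖ := by
  have hδm : min (1/4 : ℝ) (m/2) ≤ m/2 := min_le_right _ _
  have hδ4 : min (1/4 : ℝ) (m/2) ≤ 1/4 := min_le_left _ _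
  have hδ0 : 0 < min (1/4 : ℝ) (m/2) := lt_min (by norm_num) (by positivity)
  rw [arg_expand]
  have h1 := norm_sinh_ge_sin (a*s) (-(a*τ))
  have h2 := norm_sinh_ge_sinh (a*s) (-(a*τ))
  rw [Real.sin_neg, abs_neg, ← hm] at h1
  rw [Real.abs_sinh, abs_mul, abs_of_pos ha] at h2
  have hu1 : (1:ℝ) ≤ Real.exp (a * |s|) := Real.one_le_exp (by positivity)
  have hexpneg : Real.exp (-(a * |s|)) ≤ 1 :=
    Real.exp_le_one_iff.mpr (neg_nonpos.mpr (by positivity))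
  have hsinh : (Real.exp (a * |s|) - 1) / 2 ≤ Real.sinh (a * |s|) := by
    rw [Real.sinh_eq]; nlinarith
  rcases le_or_gt (Real.exp (a * |s|)) 2 with hu2 | hu2
  · nlinarith
  · nlinarith

lemma line_integrable_full (a τ y' : ℝ) (ha : 0 < a) (hτ : Real.sin (a * τ) ≠ 0) :
    Integrable (fun s : ℝ => ((a : ℂ) / Complex.sinh ((a : ℂ) * ((s : ℂ) - Complex.I * (τ : ℂ)))) *
      Complex.exp (Complex.I * ((s : ℂ) - Complex.I * (τ : ℂ)) * (y' : ℂ))) := by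
  set m : ℝ := |Real.sin (a * τ)| with hm
  have hm0 : 0 < m := abs_pos.mpr hτ
  have hδ0 : 0 < min (1/4 : ℝ) (m/2) := lt_min (by norm_num) (by positivity)
  have hne : ∀ s : ℝ, Complex.sinh ((a : ℂ) * ((s : ℂ) - Complex.I * (τ : ℂ))) ≠ 0 := by
    intro s
    rw [arg_expand]
    exact sinh_line_ne_zero (by rw [Real.sin_neg]; simpa using hτ)
  have hcont : Continuous (fun s : ℝ =>
      ((a : ℂ) / Complex.sinh ((a : ℂ) * ((s : ℂ) - Complex.I * (τ : ℂ)))) *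
      Complex.exp (Complex.I * ((s : ℂ) - Complex.I * (τ : ℂ)) * (y' : ℂ))) := by
    apply Continuous.mul
    · exact continuous_const.div (Complex.continuous_sinh.comp (by continuity)) hne
    · exact Complex.continuous_exp.comp (by continuity)
  refine ((integrable_exp_neg_abs ha).const_mul
      ((a * Real.exp (τ * y')) / min (1/4 : ℝ) (m/2))).mono'
    hcont.aestronglyMeasurable (Filter.Eventually.of_forall fun s => ?_)
  have hlow := sinh_line_lower a τ ha hm hm0 s
  have hnorm0 : 0 < ‖Complex.sinh ((a : ℂ) * ((s : ℂ) - Complex.I * (τ : ℂ)))‖ :=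
    norm_pos_iff.mpr (hne s)
  have hanorm : ‖(a : ℂ)‖ = a := by
    rw [Complex.norm_real, Real.norm_eq_abs, abs_of_pos ha]
  calc ‖((a : ℂ) / Complex.sinh ((a : ℂ) * ((s : ℂ) - Complex.I * (τ : ℂ)))) *
      Complex.exp (Complex.I * ((s : ℂ) - Complex.I * (τ : ℂ)) * (y' : ℂ))‖
      = a * Real.exp (τ * y') / ‖Complex.sinh ((a : ℂ) * ((s : ℂ) - Complex.I * (τ : ℂ)))‖ := by
        rw [norm_mul, norm_div, exp_line_norm, hanorm]; ring
    _ ≤ a * Real.exp (τ * y') / (min (1/4 : ℝ) (m/2) * Real.exp (a * |s|)) :=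
        div_le_div_of_nonneg_left (by positivity) (mul_pos hδ0 (Real.exp_pos _)) hlow
    _ = a * Real.exp (τ * y') / min (1/4 : ℝ) (m/2) * Real.exp (-(a * |s|)) := by
        rw [Real.exp_neg]
        field_simp
  -- note: order of goals in div_le_div_of_nonneg_left may differ; adjusted below if needed

lemma line_integrable_noexp (a τ : ℝ) (ha : 0 < a) (hτ : Real.sin (a * τ) ≠ 0) :
    Integrable (fun s : ℝ =>
      (a : ℂ) / Complex.sinh ((a : ℂ) * ((s : ℂ) - Complex.I * (τ : ℂ)))) := by
  have h := line_integrable_full a τ 0 ha hτ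
  refine h.congr (Filter.Eventually.of_forall fun s => ?_)
  simp

lemma tendsto_sinh_atTop : Filter.Tendsto Real.sinh atTop atTop := by
  apply tendsto_atTop_mono' _ _ tendsto_id
  filter_upwards [eventually_gt_atTop (0 : ℝ)] with x hx
  exact (Real.self_lt_sinh_iff.mpr hx).le

lemma tendsto_sinh_atBot : Filter.Tendsto Real.sinh atBot atBot := by
  apply tendsto_atBot_mono' _ _ tendsto_id
  filter_upwards [eventually_lt_atBot (0 : ℝ)] with x hx
  have h1 := Real.self_lt_sinh_iff.mpr (neg_pos.mpr hx)
  rw [Real.sinh_neg] at h1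
  have h2 : Real.sinh x < x := by linarith
  exact h2.le

lemma div_complex_key (a p q PP QQ : ℝ)
    (hre : PP * p - QQ * q = a) (him : PP * q + QQ * p = 0)
    (hne : ((p : ℂ) + (q : ℂ) * Complex.I) ≠ 0) :
    (a : ℂ) / ((p : ℂ) + (q : ℂ) * Complex.I) = (PP : ℂ) + (QQ : ℂ) * Complex.I := by
  rw [div_eq_iff hne]
  apply Complex.ext
  · simp only [Complex.add_re, Complex.mul_re, Complex.mul_im, Complex.add_im,
      Complex.ofReal_re, Complex.ofReal_im, Complex.I_re, Complex.I_im]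
    ring_nf
    nlinarith [hre, him]
  · simp only [Complex.add_re, Complex.mul_re, Complex.mul_im, Complex.add_im,
      Complex.ofReal_re, Complex.ofReal_im, Complex.I_re, Complex.I_im]
    ring_nf
    nlinarith [hre, him]

lemma J_pos (a τ : ℝ) (ha : 0 < a) (hτ : 0 < Real.sin (a * τ)) :
    ∫ s : ℝ, (a : ℂ) / Complex.sinh ((a : ℂ) * ((s : ℂ) - Complex.I * (τ : ℂ))) =
      (π : ℂ) * Complex.I := by
  have hm0 : 0 < Real.sin (a * τ) := hτ
  have hD0 : ∀ s : ℝ, 0 < Real.sinh (a * s) ^ 2 + Real.sin (a * τ) ^ 2 := fun s => by positivity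
  set P : ℝ → ℝ := fun s => a * Real.sinh (a * s) * Real.cos (a * τ) /
    (Real.sinh (a * s) ^ 2 + Real.sin (a * τ) ^ 2) with hP
  set Q : ℝ → ℝ := fun s => a * Real.cosh (a * s) * Real.sin (a * τ) /
    (Real.sinh (a * s) ^ 2 + Real.sin (a * τ) ^ 2) with hQ
  have hne : ∀ s : ℝ, Complex.sinh ((a : ℂ) * ((s : ℂ) - Complex.I * (τ : ℂ))) ≠ 0 := by
    intro s
    rw [arg_expand]
    exact sinh_line_ne_zero (by rw [Real.sin_neg]; simpa using hτ.ne')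
  have hpt : ∀ s : ℝ, (a : ℂ) / Complex.sinh ((a : ℂ) * ((s : ℂ) - Complex.I * (τ : ℂ))) =
      ((P s : ℝ) : ℂ) + ((Q s : ℝ) : ℂ) * Complex.I := by
    intro s
    have hne2 : ((Real.sinh (a*s) * Real.cos (-(a*τ)) : ℝ) : ℂ) +
        ((Real.cosh (a*s) * Real.sin (-(a*τ)) : ℝ) : ℂ) * Complex.I ≠ 0 := by
      rw [← sinh_expand]
      have := hne s
      rwa [arg_expand] at this
    rw [arg_expand, sinh_expand]
    apply div_complex_key
    · rw [hP, hQ]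
      have key := Real.sin_sq_add_cos_sq (a*τ)
      have key2 := Real.cosh_sq (a*s)
      rw [Real.cos_neg, Real.sin_neg]
      field_simp
      linear_combination (Real.sinh (a*s)^2) * key + (Real.sin (a*τ)^2) * key2
    · rw [hP, hQ]
      rw [Real.cos_neg, Real.sin_neg]
      field_simp
      ring
    · exact hne2
  have hfi : Integrable (fun s : ℝ =>
      (a : ℂ) / Complex.sinh ((a : ℂ) * ((s : ℂ) - Complex.I * (τ : ℂ)))) :=
    line_integrable_noexp a τ ha hτ.ne'
  have hPi : Integrable P := by
    refine hfi.re.congr (Filter.Eventually.of_forall fun s => ?_)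
    dsimp only
    rw [hpt s]
    simp
  have hQi : Integrable Q := by
    refine hfi.im.congr (Filter.Eventually.of_forall fun s => ?_)
    dsimp only
    rw [hpt s]
    simp
  have hadd : (∫ s : ℝ, (((P s : ℝ) : ℂ) + ((Q s : ℝ) : ℂ) * Complex.I)) =
      (∫ s : ℝ, ((P s : ℝ) : ℂ)) + ∫ s : ℝ, ((Q s : ℝ) : ℂ) * Complex.I :=
    integral_add hPi.ofReal (hQi.ofReal.mul_const _)
  have hmulr : (∫ s : ℝ, ((Q s : ℝ) : ℂ) * Complex.I) =
      (∫ s : ℝ, ((Q s : ℝ) : ℂ)) * Complex.I := integral_mul_const _ _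
  have hsplit : (∫ s : ℝ, (a : ℂ) / Complex.sinh ((a : ℂ) * ((s : ℂ) - Complex.I * (τ : ℂ)))) =
      ((∫ s : ℝ, P s : ℝ) : ℂ) + ((∫ s : ℝ, Q s : ℝ) : ℂ) * Complex.I := by
    have hPor : (∫ s : ℝ, ((P s : ℝ) : ℂ)) = (((∫ s : ℝ, P s) : ℝ) : ℂ) := by
      first
      | exact integral_ofReal
      | exact_mod_cast integral_ofReal
    have hQor : (∫ s : ℝ, ((Q s : ℝ) : ℂ)) = (((∫ s : ℝ, Q s) : ℝ) : ℂ) := by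
      first
      | exact integral_ofReal
      | exact_mod_cast integral_ofReal
    rw [integral_congr_ae (Filter.Eventually.of_forall hpt), hadd, hmulr, hPor, hQor]
  have hodd : ∀ s : ℝ, P (-s) = - P s := by
    intro s
    simp only [hP, mul_neg, Real.sinh_neg, neg_sq]
    ring
  have hPzero : (∫ s : ℝ, P s) = 0 := by
    have h1 : (∫ s : ℝ, P s) = ∫ s : ℝ, P (-s) := (integral_neg_eq_self P volume).symm
    have h2 : (∫ s : ℝ, P (-s)) = - ∫ s : ℝ, P s := by
      simp_rw [hodd]
      exact integral_neg P
    linarith [h1.trans h2]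
  have hG : ∀ s : ℝ, HasDerivAt (fun x : ℝ => Real.arctan (Real.sinh (a * x) / Real.sin (a * τ)))
      (Q s) s := by
    intro s
    have h2 : HasDerivAt (fun x : ℝ => a * x) a s := by
      simpa using (hasDerivAt_id s).const_mul a
    have h1 : HasDerivAt (fun x : ℝ => Real.sinh (a * x) / Real.sin (a * τ))
        (Real.cosh (a * s) * a / Real.sin (a * τ)) s :=
      ((Real.hasDerivAt_sinh (a * s)).comp s h2).div_const _
    have h3 := (Real.hasDerivAt_arctan (Real.sinh (a * s) / Real.sin (a * τ))).comp s h1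
    refine h3.congr_deriv ?_
    rw [hQ]
    have hD := hD0 s
    field_simp
    ring
  have htop : Filter.Tendsto (fun x : ℝ => Real.arctan (Real.sinh (a * x) / Real.sin (a * τ)))
      atTop (nhds (π/2)) := by
    have h1 : Filter.Tendsto (fun x : ℝ => Real.sinh (a * x) / Real.sin (a * τ)) atTop atTop :=
      (tendsto_sinh_atTop.comp (Filter.tendsto_id.const_mul_atTop ha)).atTop_div_const hm0
    exact (tendsto_nhds_of_tendsto_nhdsWithin Real.tendsto_arctan_atTop).comp h1
  have hbot : Filter.Tendsto (fun x : ℝ => Real.arctan (Real.sinh (a * x) / Real.sin (a * τ)))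
      atBot (nhds (-(π/2))) := by
    have h1 : Filter.Tendsto (fun x : ℝ => Real.sinh (a * x) / Real.sin (a * τ)) atBot atBot :=
      (tendsto_sinh_atBot.comp (Filter.tendsto_id.const_mul_atBot ha)).atBot_div_const hm0
    exact (tendsto_nhds_of_tendsto_nhdsWithin Real.tendsto_arctan_atBot).comp h1
  have hQIoi : ∫ s in Ioi (0:ℝ), Q s = π/2 := by
    have h4 := integral_Ioi_of_hasDerivAt_of_tendsto' (a := (0:ℝ)) (fun x _ => hG x) hQi.integrableOn htop
    simpa using h4
  have hQIic : ∫ s in Iic (0:ℝ), Q s = π/2 := by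
    have h4 := integral_Iic_of_hasDerivAt_of_tendsto' (a := (0:ℝ)) (fun x _ => hG x) hQi.integrableOn hbot
    simpa using h4
  have hQval : (∫ s : ℝ, Q s) = π := by
    have h4 := integral_add_compl (measurableSet_Iic : MeasurableSet (Iic (0:ℝ))) hQi
    rw [compl_Iic] at h4
    rw [← h4, hQIic, hQIoi]
    ring
  rw [hsplit, hPzero, hQval]
  simp

lemma J_neg (a τ : ℝ) (ha : 0 < a) (hτ : Real.sin (a * τ) < 0) :
    ∫ s : ℝ, (a : ℂ) / Complex.sinh ((a : ℂ) * ((s : ℂ) - Complex.I * (τ : ℂ))) =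
      -((π : ℂ) * Complex.I) := by
  have hpos : 0 < Real.sin (a * (-τ)) := by
    rw [mul_neg, Real.sin_neg]; linarith
  have hJ := J_pos a (-τ) ha hpos
  have hconj : ∀ s : ℝ, (a : ℂ) / Complex.sinh ((a : ℂ) * ((s : ℂ) - Complex.I * (τ : ℂ))) =
      (starRingEnd ℂ) ((a : ℂ) /
        Complex.sinh ((a : ℂ) * ((s : ℂ) - Complex.I * ((-τ : ℝ) : ℂ)))) := by
    intro s
    rw [map_div₀, Complex.conj_ofReal, ← Complex.sinh_conj]
    congr 2
    apply Complex.ext <;>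
      simp [Complex.mul_re, Complex.mul_im, Complex.sub_re, Complex.sub_im]
  rw [integral_congr_ae (Filter.Eventually.of_forall hconj), integral_conj, hJ]
  simp [Complex.conj_I, Complex.conj_ofReal]

lemma shift {F : ℂ → ℂ} {b₁ b₂ : ℝ} (hb : b₁ ≤ b₂) {B : ℝ → ℝ}
    (hd : ∀ z : ℂ, z.im ∈ Icc b₁ b₂ → DifferentiableAt ℂ F z)
    (hbound : ∀ x t : ℝ, 1 ≤ |x| → t ∈ Icc b₁ b₂ → ‖F ((x : ℂ) + (t : ℂ) * Complex.I)‖ ≤ B |x|)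
    (hB : Filter.Tendsto B atTop (nhds 0))
    (h₁ : Integrable fun s : ℝ => F ((s : ℂ) + (b₁ : ℂ) * Complex.I))
    (h₂ : Integrable fun s : ℝ => F ((s : ℂ) + (b₂ : ℂ) * Complex.I)) :
    ∫ s : ℝ, F ((s : ℂ) + (b₁ : ℂ) * Complex.I) = ∫ s : ℝ, F ((s : ℂ) + (b₂ : ℂ) * Complex.I) := by
  have key : ∀ T : ℝ,
      (∫ x in (-T)..T, F ((x : ℂ) + (b₁ : ℂ) * Complex.I)) -
        (∫ x in (-T)..T, F ((x : ℂ) + (b₂ : ℂ) * Complex.I)) =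
      Complex.I • (∫ t in b₁..b₂, F (((-T : ℝ) : ℂ) + (t : ℂ) * Complex.I)) -
        Complex.I • (∫ t in b₁..b₂, F (((T : ℝ) : ℂ) + (t : ℂ) * Complex.I)) := by
    intro T
    set z : ℂ := ((-T : ℝ) : ℂ) + (b₁ : ℂ) * Complex.I with hz
    set w : ℂ := ((T : ℝ) : ℂ) + (b₂ : ℂ) * Complex.I with hw
    have hzre : z.re = -T := by simp [hz]
    have hzim : z.im = b₁ := by simp [hz]
    have hwre : w.re = T := by simp [hw]
    have hwim : w.im = b₂ := by simp [hw]
    have hrect := Complex.integral_boundary_rect_eq_zero_of_differentiableOn F z w ?_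
    · rw [hzre, hzim, hwre, hwim] at hrect
      linear_combination hrect
    · intro ζ hζ
      rw [Complex.mem_reProdIm, hzim, hwim, uIcc_of_le hb] at hζ
      exact (hd ζ hζ.2).differentiableWithinAt
  have hL₁ : Filter.Tendsto (fun T : ℝ => ∫ x in (-T)..T, F ((x : ℂ) + (b₁ : ℂ) * Complex.I)) atTop
      (nhds (∫ s : ℝ, F ((s : ℂ) + (b₁ : ℂ) * Complex.I))) :=
    intervalIntegral_tendsto_integral h₁ tendsto_neg_atTop_atBot tendsto_id
  have hL₂ : Filter.Tendsto (fun T : ℝ => ∫ x in (-T)..T, F ((x : ℂ) + (b₂ : ℂ) * Complex.I)) atTop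
      (nhds (∫ s : ℝ, F ((s : ℂ) + (b₂ : ℂ) * Complex.I))) :=
    intervalIntegral_tendsto_integral h₂ tendsto_neg_atTop_atBot tendsto_id
  have hBside : Filter.Tendsto (fun T : ℝ => B |T| * |b₂ - b₁|) atTop (nhds 0) := by
    have h5 := (hB.comp tendsto_abs_atTop_atTop).mul_const |b₂ - b₁|
    simpa using h5
  have hside : ∀ c : ℝ → ℝ, (∀ T : ℝ, |c T| = |T|) →
      Filter.Tendsto
        (fun T : ℝ => Complex.I • (∫ t in b₁..b₂, F (((c T : ℝ) : ℂ) + (t : ℂ) * Complex.I)))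
        atTop (nhds 0) := by
    intro c hc
    apply squeeze_zero_norm' _ hBside
    filter_upwards [eventually_ge_atTop (1 : ℝ)] with T hT
    rw [norm_smul, Complex.norm_I, one_mul]
    have hbd : ∀ t ∈ Set.uIoc b₁ b₂, ‖F (((c T : ℝ) : ℂ) + (t : ℂ) * Complex.I)‖ ≤ B |T| := by
      intro t ht
      rw [Set.uIoc_of_le hb] at ht
      have h6 := hbound (c T) t (by rw [hc T]; exact le_trans hT (le_abs_self T))
        (Ioc_subset_Icc_self ht)
      rwa [hc T] at h6
    exact intervalIntegral.norm_integral_le_of_norm_le_const hbd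
  have hsideL := hside (fun T => -T) (fun T => abs_neg T)
  have hsideR := hside (fun T => T) (fun T => rfl)
  have hdiff : Filter.Tendsto (fun T : ℝ =>
      (∫ x in (-T)..T, F ((x : ℂ) + (b₁ : ℂ) * Complex.I)) -
        (∫ x in (-T)..T, F ((x : ℂ) + (b₂ : ℂ) * Complex.I))) atTop (nhds 0) := by
    have h0 := hsideL.sub hsideR
    rw [sub_zero] at h0
    exact h0.congr fun T => (key T).symm
  have h7 := tendsto_nhds_unique (hL₁.sub hL₂) hdiff
  exact sub_eq_zero.mp h7

/-! ### The corrected function `Phi` -/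

def cc (a : ℝ) : ℂ := -((π / a : ℝ) : ℂ) * Complex.I

def fnum (y : ℝ) : ℂ → ℂ := fun w => Complex.exp (Complex.I * w * (y : ℂ))

def fden (a : ℝ) : ℂ → ℂ := fun w => Complex.sinh ((a : ℂ) * w)

def Phi (a y : ℝ) : ℂ → ℂ :=
  fun z => (a : ℂ) * (dslope (fnum y) (cc a) z / dslope (fden a) (cc a) z)

lemma cc_re (a : ℝ) : (cc a).re = 0 := by simp [cc]

lemma cc_im (a : ℝ) : (cc a).im = -(π / a) := by simp [cc]

lemma mul_cc (a : ℝ) (ha : 0 < a) : (a : ℂ) * cc a = ((-π : ℝ) : ℂ) * Complex.I := by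
  rw [cc]
  have h : (a : ℂ) ≠ 0 := Complex.ofReal_ne_zero.mpr ha.ne'
  push_cast
  field_simp

lemma fden_cc (a : ℝ) (ha : 0 < a) : fden a (cc a) = 0 := by
  show Complex.sinh ((a : ℂ) * cc a) = 0
  rw [mul_cc a ha, Complex.sinh_mul_I, ← Complex.ofReal_sin]
  simp

lemma fnum_cc (a y : ℝ) (ha : 0 < a) :
    fnum y (cc a) = ((Real.exp (π * y / a) : ℝ) : ℂ) := by
  show Complex.exp (Complex.I * cc a * (y : ℂ)) = _
  have h1 : Complex.I * cc a * (y : ℂ) =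
      -(((π / a : ℝ) : ℂ)) * (Complex.I * Complex.I) * (y : ℂ) := by
    rw [cc]; ring
  rw [h1, Complex.I_mul_I]
  have h2 : -(((π / a : ℝ)) : ℂ) * -1 * (y : ℂ) = ((π * y / a : ℝ) : ℂ) := by
    push_cast; ring
  rw [h2, ← Complex.ofReal_exp]

lemma dslope_fden_cc (a : ℝ) (ha : 0 < a) : dslope (fden a) (cc a) (cc a) = -(a : ℂ) := by
  rw [dslope_same]
  have h2 : HasDerivAt (fun w : ℂ => (a : ℂ) * w) (a : ℂ) (cc a) := by
    simpa using (hasDerivAt_id (cc a)).const_mul (a : ℂ)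
  have hd : HasDerivAt (fden a) (Complex.cosh ((a : ℂ) * cc a) * (a : ℂ)) (cc a) :=
    (Complex.hasDerivAt_sinh ((a : ℂ) * cc a)).comp (cc a) h2
  rw [hd.deriv, mul_cc a ha, Complex.cosh_mul_I, ← Complex.ofReal_cos]
  norm_num [Real.cos_pi]

lemma fnum_diff (y : ℝ) : Differentiable ℂ (fnum y) :=
  ((differentiable_id.const_mul Complex.I).mul_const _).cexp

lemma fden_diff (a : ℝ) : Differentiable ℂ (fden a) :=
  Complex.differentiable_sinh.comp (differentiable_id.const_mul _)

lemma dslope_fnum_diff (a y : ℝ) : Differentiable ℂ (dslope (fnum y) (cc a)) := by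
  rw [← differentiableOn_univ]
  exact (Complex.differentiableOn_dslope Filter.univ_mem).mpr (fnum_diff y).differentiableOn

lemma dslope_fden_diff (a : ℝ) : Differentiable ℂ (dslope (fden a) (cc a)) := by
  rw [← differentiableOn_univ]
  exact (Complex.differentiableOn_dslope Filter.univ_mem).mpr (fden_diff a).differentiableOn

lemma Phi_eq (a y : ℝ) (ha : 0 < a) {z : ℂ} (hzc : z ≠ cc a)
    (hs : Complex.sinh ((a : ℂ) * z) ≠ 0) :
    Phi a y z = ((a : ℂ) / Complex.sinh ((a : ℂ) * z)) * Complex.exp (Complex.I * z * (y : ℂ))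
      - ((Real.exp (π * y / a) : ℝ) : ℂ) * ((a : ℂ) / Complex.sinh ((a : ℂ) * z)) := by
  have hzc' : z - cc a ≠ 0 := sub_ne_zero.mpr hzc
  show (a : ℂ) * (dslope (fnum y) (cc a) z / dslope (fden a) (cc a) z) = _
  rw [dslope_of_ne _ hzc, dslope_of_ne _ hzc, slope_def_field, slope_def_field,
    fden_cc a ha, fnum_cc a y ha, sub_zero]
  simp only [fnum, fden]
  field_simp

lemma sinh_ne_strip (a σ : ℝ) (ha : 0 < a) (hσ : 0 < σ) (hσa : a * σ < π) :
    ∀ z : ℂ, z.im ∈ Icc (-(σ + π/a)) (-σ) → z ≠ cc a → Complex.sinh ((a : ℂ) * z) ≠ 0 := by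
  intro z hz hzc
  have hπ := Real.pi_pos
  have hz2 : (a : ℂ) * z = ((a * z.re : ℝ) : ℂ) + ((a * z.im : ℝ) : ℂ) * Complex.I := by
    apply Complex.ext <;> simp [Complex.mul_re, Complex.mul_im]
  rw [hz2]
  rcases eq_or_ne (Real.sin (a * z.im)) 0 with hsin | hsin
  · have hrange1 : a * z.im ≤ -(a * σ) := by nlinarith [hz.2]
    have hrange2 : -(a * σ) - π ≤ a * z.im := by
      have h3 := hz.1
      have h4 : a * (-(σ + π/a)) = -(a * σ) - π := by field_simp; ring
      nlinarith [mul_le_mul_of_nonneg_left h3 ha.le]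
    obtain ⟨n, hn⟩ := Real.sin_eq_zero_iff.mp hsin
    have hσa0 : 0 < a * σ := mul_pos ha hσ
    have h5 : n = -1 := by
      have h6 : ((-2 : ℤ) : ℝ) < (n : ℝ) := by push_cast; nlinarith
      have h7 : ((n : ℝ)) < ((0 : ℤ) : ℝ) := by push_cast; nlinarith
      have h6' : (-2 : ℤ) < n := by exact_mod_cast h6
      have h7' : n < 0 := by exact_mod_cast h7
      omega
    have hzim : z.im = -(π / a) := by
      rw [h5] at hn
      push_cast at hn
      field_simp
      linarith
    have hzre : z.re ≠ 0 := by
      intro h0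
      apply hzc
      apply Complex.ext
      · rw [h0, cc_re]
      · rw [hzim, cc_im]
    intro hzero
    have h7 := norm_sinh_ge_sinh (a * z.re) (a * z.im)
    rw [hzero, norm_zero] at h7
    have h8 : Real.sinh (a * z.re) = 0 := by
      have h9 := abs_nonneg (Real.sinh (a * z.re))
      have h10 : |Real.sinh (a * z.re)| = 0 := le_antisymm h7 h9
      exact abs_eq_zero.mp h10
    have h11 : a * z.re = 0 := by
      have := Real.sinh_injective (h8.trans Real.sinh_zero.symm)
      exact this
    exact hzre ((mul_eq_zero.mp h11).resolve_left ha.ne')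
  · exact sinh_line_ne_zero hsin

lemma Phi_diff (a σ y : ℝ) (ha : 0 < a) (hσ : 0 < σ) (hσa : a * σ < π) :
    ∀ z : ℂ, z.im ∈ Icc (-(σ + π/a)) (-σ) → DifferentiableAt ℂ (Phi a y) z := by
  intro z hz
  have hden_ne : dslope (fden a) (cc a) z ≠ 0 := by
    rcases eq_or_ne z (cc a) with hzc | hzc
    · rw [hzc, dslope_fden_cc a ha]
      simpa using ha.ne'
    · rw [dslope_of_ne _ hzc, slope_def_field, fden_cc a ha, sub_zero]
      exact div_ne_zero (sinh_ne_strip a σ ha hσ hσa z hz hzc) (sub_ne_zero.mpr hzc)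
  exact (((dslope_fnum_diff a y) z).div ((dslope_fden_diff a) z) hden_ne).const_mul _

lemma Phi_bound (a σ y : ℝ) (ha : 0 < a) (hσ : 0 < σ) :
    ∀ x t : ℝ, 1 ≤ |x| → t ∈ Icc (-(σ + π/a)) (-σ) →
      ‖Phi a y ((x : ℂ) + (t : ℂ) * Complex.I)‖ ≤
        a * (Real.exp ((σ + π/a) * |y|) + Real.exp (π * y / a)) / Real.sinh (a * |x|) := by
  intro x t hx ht
  have hπa : 0 < π / a := div_pos Real.pi_pos ha
  have hzre : ((x : ℂ) + (t : ℂ) * Complex.I).re = x := by simp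
  have hzim : ((x : ℂ) + (t : ℂ) * Complex.I).im = t := by simp
  have hzc : ((x : ℂ) + (t : ℂ) * Complex.I) ≠ cc a := by
    intro h
    have h1 := congrArg Complex.re h
    rw [hzre, cc_re] at h1
    rw [h1, abs_zero] at hx
    linarith
  have hx0 : 0 < a * |x| := mul_pos ha (lt_of_lt_of_le one_pos hx)
  have hz2 : (a : ℂ) * ((x : ℂ) + (t : ℂ) * Complex.I) =
      ((a * x : ℝ) : ℂ) + ((a * t : ℝ) : ℂ) * Complex.I := by
    push_cast; ring
  have hsinh_pos : 0 < Real.sinh (a * |x|) := Real.sinh_pos_iff.mpr hx0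
  have hs_lower : Real.sinh (a * |x|) ≤ ‖Complex.sinh ((a : ℂ) * ((x : ℂ) + (t : ℂ) * Complex.I))‖ := by
    rw [hz2]
    have h2 := norm_sinh_ge_sinh (a * x) (a * t)
    rwa [Real.abs_sinh, abs_mul, abs_of_pos ha] at h2
  have hs_ne : Complex.sinh ((a : ℂ) * ((x : ℂ) + (t : ℂ) * Complex.I)) ≠ 0 := by
    intro h0
    rw [h0, norm_zero] at hs_lower
    linarith
  rw [Phi_eq a y ha hzc hs_ne]
  have hE0 : (0:ℝ) < Real.exp (π * y / a) := Real.exp_pos _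
  have hexp : ‖Complex.exp (Complex.I * ((x : ℂ) + (t : ℂ) * Complex.I) * (y : ℂ))‖ ≤
      Real.exp ((σ + π/a) * |y|) := by
    have h1 : Complex.I * ((x : ℂ) + (t : ℂ) * Complex.I) * (y : ℂ) =
        ((-(t * y) : ℝ) : ℂ) + ((x * y : ℝ) : ℂ) * Complex.I := by
      apply Complex.ext <;>
        simp [Complex.mul_re, Complex.mul_im, Complex.add_re, Complex.add_im] <;> ring
    rw [h1, Complex.norm_exp]
    have h2 : ((((-(t * y) : ℝ)) : ℂ) + ((x * y : ℝ) : ℂ) * Complex.I).re = -(t * y) := by simp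
    rw [h2]
    apply Real.exp_le_exp.mpr
    have htabs : |t| ≤ σ + π/a := by
      rw [abs_le]
      exact ⟨ht.1, by linarith [ht.2]⟩
    calc -(t * y) ≤ |t * y| := neg_le_abs _
      _ = |t| * |y| := abs_mul t y
      _ ≤ (σ + π/a) * |y| := mul_le_mul_of_nonneg_right htabs (abs_nonneg y)
  have hnorm_div : ‖(a : ℂ) / Complex.sinh ((a : ℂ) * ((x : ℂ) + (t : ℂ) * Complex.I))‖ ≤
      a / Real.sinh (a * |x|) := by
    rw [norm_div, Complex.norm_real, Real.norm_eq_abs, abs_of_pos ha]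
    exact div_le_div_of_nonneg_left ha.le hsinh_pos hs_lower
  calc ‖((a : ℂ) / Complex.sinh ((a : ℂ) * ((x : ℂ) + (t : ℂ) * Complex.I))) *
        Complex.exp (Complex.I * ((x : ℂ) + (t : ℂ) * Complex.I) * (y : ℂ)) -
        ((Real.exp (π * y / a) : ℝ) : ℂ) *
          ((a : ℂ) / Complex.sinh ((a : ℂ) * ((x : ℂ) + (t : ℂ) * Complex.I)))‖
      ≤ ‖((a : ℂ) / Complex.sinh ((a : ℂ) * ((x : ℂ) + (t : ℂ) * Complex.I))) *
          Complex.exp (Complex.I * ((x : ℂ) + (t : ℂ) * Complex.I) * (y : ℂ))‖ +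
        ‖((Real.exp (π * y / a) : ℝ) : ℂ) *
          ((a : ℂ) / Complex.sinh ((a : ℂ) * ((x : ℂ) + (t : ℂ) * Complex.I)))‖ :=
      norm_sub_le _ _
    _ ≤ (a / Real.sinh (a * |x|)) * Real.exp ((σ + π/a) * |y|) +
        Real.exp (π * y / a) * (a / Real.sinh (a * |x|)) := by
      apply add_le_add
      · rw [norm_mul]
        exact mul_le_mul hnorm_div hexp (norm_nonneg _) (by positivity)
      · rw [norm_mul, Complex.norm_real, Real.norm_eq_abs, abs_of_pos hE0]
        exact mul_le_mul_of_nonneg_left hnorm_div hE0.le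
    _ = a * (Real.exp ((σ + π/a) * |y|) + Real.exp (π * y / a)) / Real.sinh (a * |x|) := by
      field_simp

end Stmt11Aux

open Stmt11Aux

theorem stmt_11 (a σ y : ℝ) (ha : 0 < a) (hσ : 0 < σ) (hσa : σ * a < π) :
    Integrable (fun s : ℝ =>
      ((a : ℂ) / Complex.sinh ((a : ℂ) * ((s : ℂ) - Complex.I * σ))) *
        Complex.exp (Complex.I * ((s : ℂ) - Complex.I * σ) * y)) ∧
    (2 * (π : ℂ) * Complex.I)⁻¹ *
        ∫ s : ℝ, ((a : ℂ) / Complex.sinh ((a : ℂ) * ((s : ℂ) - Complex.I * σ))) *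
          Complex.exp (Complex.I * ((s : ℂ) - Complex.I * σ) * y) =
      ((Real.exp (π * y / a) / (1 + Real.exp (π * y / a)) : ℝ) : ℂ) := by
  have hπ := Real.pi_pos
  have haσ : 0 < a * σ := mul_pos ha hσ
  have haσπ : a * σ < π := by linarith [hσa, mul_comm σ a]
  have hπa : 0 < π / a := div_pos hπ ha
  have hsinσ : 0 < Real.sin (a * σ) := Real.sin_pos_of_pos_of_lt_pi haσ haσπ
  have haτ' : a * (σ + π / a) = a * σ + π := by field_simp
  have hsinτ' : Real.sin (a * (σ + π / a)) < 0 := by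
    rw [haτ', Real.sin_add_pi]; linarith
  have hIntGσ := line_integrable_full a σ y ha hsinσ.ne'
  refine ⟨hIntGσ, ?_⟩
  have hIntGτ' := line_integrable_full a (σ + π / a) y ha hsinτ'.ne
  have hIntUσ := line_integrable_noexp a σ ha hsinσ.ne'
  have hIntUτ' := line_integrable_noexp a (σ + π / a) ha hsinτ'.ne
  have hJσ := J_pos a σ ha hsinσ
  have hJτ' := J_neg a (σ + π / a) ha hsinτ'
  set E : ℝ := Real.exp (π * y / a) with hE
  have hE0 : 0 < E := Real.exp_pos _
  -- line parametrization identities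
  have hline₂ : ∀ s : ℝ, ((s : ℂ) + ((-σ : ℝ) : ℂ) * Complex.I) = ((s : ℂ) - Complex.I * (σ : ℂ)) := by
    intro s; push_cast; ring
  have hline₁ : ∀ s : ℝ, ((s : ℂ) + ((-(σ + π / a) : ℝ) : ℂ) * Complex.I) =
      ((s : ℂ) - Complex.I * ((σ + π / a : ℝ) : ℂ)) := by
    intro s; push_cast; ring
  -- points on the lines avoid cc a
  have hσne : σ < π / a := (lt_div_iff₀ ha).mpr hσa
  have hne_c₂ : ∀ s : ℝ, ((s : ℂ) - Complex.I * (σ : ℂ)) ≠ cc a := by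
    intro s h
    have h1 := congrArg Complex.im h
    rw [cc_im] at h1
    simp at h1
    linarith
  have hne_c₁ : ∀ s : ℝ, ((s : ℂ) - Complex.I * ((σ + π / a : ℝ) : ℂ)) ≠ cc a := by
    intro s h
    have h1 := congrArg Complex.im h
    rw [cc_im] at h1
    simp at h1
    linarith
  have hs₂ : ∀ s : ℝ, Complex.sinh ((a : ℂ) * ((s : ℂ) - Complex.I * (σ : ℂ))) ≠ 0 := by
    intro s
    rw [arg_expand]
    exact sinh_line_ne_zero (by rw [Real.sin_neg]; simpa using hsinσ.ne')
  have hs₁ : ∀ s : ℝ, Complex.sinh ((a : ℂ) * ((s : ℂ) - Complex.I * ((σ + π / a : ℝ) : ℂ))) ≠ 0 := by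
    intro s
    rw [arg_expand]
    exact sinh_line_ne_zero (by rw [Real.sin_neg]; simpa using hsinτ'.ne)
  -- Phi on the two lines
  have hΦ₂ : ∀ s : ℝ, Phi a y ((s : ℂ) + ((-σ : ℝ) : ℂ) * Complex.I) =
      ((a : ℂ) / Complex.sinh ((a : ℂ) * ((s : ℂ) - Complex.I * (σ : ℂ)))) *
        Complex.exp (Complex.I * ((s : ℂ) - Complex.I * (σ : ℂ)) * (y : ℂ)) -
      (E : ℂ) * ((a : ℂ) / Complex.sinh ((a : ℂ) * ((s : ℂ) - Complex.I * (σ : ℂ)))) := by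
    intro s
    rw [hline₂ s]
    exact Phi_eq a y ha (hne_c₂ s) (hs₂ s)
  have hΦ₁ : ∀ s : ℝ, Phi a y ((s : ℂ) + ((-(σ + π / a) : ℝ) : ℂ) * Complex.I) =
      ((a : ℂ) / Complex.sinh ((a : ℂ) * ((s : ℂ) - Complex.I * ((σ + π / a : ℝ) : ℂ)))) *
        Complex.exp (Complex.I * ((s : ℂ) - Complex.I * ((σ + π / a : ℝ) : ℂ)) * (y : ℂ)) -
      (E : ℂ) * ((a : ℂ) / Complex.sinh ((a : ℂ) * ((s : ℂ) - Complex.I * ((σ + π / a : ℝ) : ℂ)))) := by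
    intro s
    rw [hline₁ s]
    exact Phi_eq a y ha (hne_c₁ s) (hs₁ s)
  -- shift identity for the integrand between the two lines
  have hGshift : ∀ s : ℝ,
      ((a : ℂ) / Complex.sinh ((a : ℂ) * ((s : ℂ) - Complex.I * ((σ + π / a : ℝ) : ℂ)))) *
        Complex.exp (Complex.I * ((s : ℂ) - Complex.I * ((σ + π / a : ℝ) : ℂ)) * (y : ℂ)) =
      -(E : ℂ) * (((a : ℂ) / Complex.sinh ((a : ℂ) * ((s : ℂ) - Complex.I * (σ : ℂ)))) *
        Complex.exp (Complex.I * ((s : ℂ) - Complex.I * (σ : ℂ)) * (y : ℂ))) := by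
    intro s
    have hzsplit : (a : ℂ) * ((s : ℂ) - Complex.I * ((σ + π / a : ℝ) : ℂ)) =
        (a : ℂ) * ((s : ℂ) - Complex.I * (σ : ℂ)) - ((π : ℝ) : ℂ) * Complex.I := by
      have h : (a : ℂ) ≠ 0 := Complex.ofReal_ne_zero.mpr ha.ne'
      push_cast
      field_simp
      ring
    have hsinh_shift : Complex.sinh ((a : ℂ) * ((s : ℂ) - Complex.I * ((σ + π / a : ℝ) : ℂ))) =
        -Complex.sinh ((a : ℂ) * ((s : ℂ) - Complex.I * (σ : ℂ))) := by
      rw [hzsplit, Complex.sinh_sub, Complex.cosh_mul_I, Complex.sinh_mul_I,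
        ← Complex.ofReal_cos, ← Complex.ofReal_sin]
      simp [Real.cos_pi, Real.sin_pi]
    have hexp_shift : Complex.exp (Complex.I * ((s : ℂ) - Complex.I * ((σ + π / a : ℝ) : ℂ)) * (y : ℂ)) =
        (E : ℂ) * Complex.exp (Complex.I * ((s : ℂ) - Complex.I * (σ : ℂ)) * (y : ℂ)) := by
      have harg : Complex.I * ((s : ℂ) - Complex.I * ((σ + π / a : ℝ) : ℂ)) * (y : ℂ) =
          Complex.I * ((s : ℂ) - Complex.I * (σ : ℂ)) * (y : ℂ) + ((π * y / a : ℝ) : ℂ) := by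
        have h : (a : ℂ) ≠ 0 := Complex.ofReal_ne_zero.mpr ha.ne'
        apply Complex.ext <;>
          simp [Complex.mul_re, Complex.mul_im, Complex.add_re, Complex.add_im,
            Complex.sub_re, Complex.sub_im] <;>
          field_simp <;> ring
      rw [harg, Complex.exp_add, ← Complex.ofReal_exp, hE]
      ring
    rw [hsinh_shift, hexp_shift, div_neg]
    ring
  -- integrability of Phi on the two lines
  have hΦint₂ : Integrable (fun s : ℝ => Phi a y ((s : ℂ) + ((-σ : ℝ) : ℂ) * Complex.I)) := by
    refine (hIntGσ.sub (hIntUσ.const_mul (E : ℂ))).congr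
      (Filter.Eventually.of_forall fun s => ?_)
    simp only [Pi.sub_apply]
    exact (hΦ₂ s).symm
  have hΦint₁ : Integrable (fun s : ℝ => Phi a y ((s : ℂ) + ((-(σ + π / a) : ℝ) : ℂ) * Complex.I)) := by
    refine (hIntGτ'.sub (hIntUτ'.const_mul (E : ℂ))).congr
      (Filter.Eventually.of_forall fun s => ?_)
    simp only [Pi.sub_apply]
    exact (hΦ₁ s).symm
  -- apply the contour shift
  have hb : -(σ + π / a) ≤ -σ := by linarith
  have hBlim : Filter.Tendsto
      (fun r : ℝ => a * (Real.exp ((σ + π/a) * |y|) + Real.exp (π * y / a)) / Real.sinh (a * r))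
      Filter.atTop (nhds 0) :=
    Filter.Tendsto.div_atTop tendsto_const_nhds
      (tendsto_sinh_atTop.comp (Filter.tendsto_id.const_mul_atTop ha))
  have hshift := shift hb (Phi_diff a σ y ha hσ haσπ) (Phi_bound a σ y ha hσ) hBlim hΦint₁ hΦint₂
  -- compute both sides
  set A : ℂ := ∫ s : ℝ, ((a : ℂ) / Complex.sinh ((a : ℂ) * ((s : ℂ) - Complex.I * (σ : ℂ)))) *
    Complex.exp (Complex.I * ((s : ℂ) - Complex.I * (σ : ℂ)) * (y : ℂ)) with hA
  have hRHS : (∫ s : ℝ, Phi a y ((s : ℂ) + ((-σ : ℝ) : ℂ) * Complex.I)) =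
      A - (E : ℂ) * ((π : ℂ) * Complex.I) := by
    rw [integral_congr_ae (Filter.Eventually.of_forall hΦ₂),
      integral_sub hIntGσ (hIntUσ.const_mul (E : ℂ)),
      integral_const_mul, hJσ, ← hA]
  have hLHS : (∫ s : ℝ, Phi a y ((s : ℂ) + ((-(σ + π / a) : ℝ) : ℂ) * Complex.I)) =
      -(E : ℂ) * A + (E : ℂ) * ((π : ℂ) * Complex.I) := by
    rw [integral_congr_ae (Filter.Eventually.of_forall hΦ₁),
      integral_sub hIntGτ' (hIntUτ'.const_mul (E : ℂ)),
      integral_congr_ae (Filter.Eventually.of_forall hGshift),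
      integral_const_mul, integral_const_mul, hJτ', ← hA]
    ring
  rw [hLHS, hRHS] at hshift
  -- solve for A
  have h1E : (1 : ℂ) + (E : ℂ) ≠ 0 := by
    have h2 : ((1 + E : ℝ) : ℂ) ≠ 0 := Complex.ofReal_ne_zero.mpr (by positivity)
    push_cast at h2
    exact h2
  have h2πI : (2 * (π : ℂ) * Complex.I) ≠ 0 := by
    simp [Complex.I_ne_zero, Complex.ofReal_ne_zero.mpr hπ.ne']
  have hAval : A * (1 + (E : ℂ)) = 2 * (π : ℂ) * Complex.I * (E : ℂ) := by
    linear_combination -hshift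
  -- final computation
  have hgoal : (2 * (π : ℂ) * Complex.I)⁻¹ * A = ((E / (1 + E) : ℝ) : ℂ) := by
    push_cast
    rw [inv_mul_eq_div, div_eq_div_iff h2πI h1E]
    linear_combination hAval
  exact hgoal
end
end

section
/- Fix σ ∈ (1/2, 2). For every real t > 0, the series Σ_{n=1}^∞ n^{−1/2−it} · t/(2πn² + t) converges and G_σ(t) = Σ_{n=1}^∞ n^{−1/2−it} · t/(2πn² + t). -/
open Complex MeasureTheory Real Set

noncomputable section

namespace Stmt13




lemma cpow_pos_eq (r : ℝ) (hr : 0 < r) (z : ℂ) :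
    (r : ℂ) ^ z = Complex.exp (z * Real.log r) := by
  rw [Complex.cpow_def_of_ne_zero (by exact_mod_cast hr.ne'), Complex.ofReal_log hr.le, mul_comm]

lemma norm_sin_lower (x y : ℝ) :
    Real.sin x * Real.cosh y ≤ ‖Complex.sin (↑x + ↑y * Complex.I)‖ := by
  have h : Complex.sin (↑x + ↑y * Complex.I)
      = ↑(Real.sin x * Real.cosh y) + ↑(Real.cos x * Real.sinh y) * Complex.I := by
    rw [Complex.sin_add, Complex.cos_mul_I, Complex.sin_mul_I]
    push_cast
    ring
  calc Real.sin x * Real.cosh y ≤ |(Complex.sin (↑x + ↑y * Complex.I)).re| := by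
        rw [h]; simp only [Complex.add_re, Complex.ofReal_re, Complex.mul_re,
          Complex.ofReal_im, Complex.I_re, Complex.I_im]
        refine le_trans (le_abs_self _) (le_of_eq ?_)
        congr 1; ring
    _ ≤ ‖Complex.sin (↑x + ↑y * Complex.I)‖ := Complex.abs_re_le_norm _

lemma one_add_sq_le_two_cosh (y : ℝ) : 1 + y ^ 2 ≤ 2 * Real.cosh (π * y) := by
  have ha : (0:ℝ) ≤ |π * y| := abs_nonneg _
  have h1 : 1 + |π * y| / 2 ≤ Real.exp (|π * y| / 2) := by
    have := Real.add_one_le_exp (|π * y| / 2); linarith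
  have h2 : (1 + |π * y| / 2) ^ 2 ≤ Real.exp (|π * y|) := by
    calc (1 + |π * y| / 2) ^ 2 ≤ (Real.exp (|π * y| / 2)) ^ 2 := by
          apply pow_le_pow_left₀ (by positivity) h1
      _ = Real.exp (|π * y|) := by rw [sq, ← Real.exp_add]; ring_nf
  have hpi : (2:ℝ) ≤ π := Real.two_le_pi
  have h3 : 1 + y ^ 2 ≤ (1 + |π * y| / 2) ^ 2 := by
    have hsq : (|π * y|) ^ 2 = π ^ 2 * y ^ 2 := by
      rw [_root_.sq_abs]; ring
    nlinarith [abs_nonneg (π * y), sq_nonneg y, sq_nonneg (π - 2), hpi]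
  have h4 : Real.exp |π * y| ≤ 2 * Real.cosh (π * y) := by
    rw [Real.cosh_eq]
    rcases abs_cases (π * y) with ⟨he, _⟩ | ⟨he, _⟩ <;> rw [he] <;>
      [skip; rw [show -(π*y) = -(π*y) from rfl]] <;>
      nlinarith [Real.exp_pos (-(π * y)), Real.exp_pos (π * y)]
  linarith

lemma norm_sin_pi_lower {c : ℝ} (hc0 : 0 < c) (hc1 : c < 1) (y : ℝ) :
    Real.sin (π * c) * ((1 + y ^ 2) / 2) ≤
      ‖Complex.sin (↑π * (↑c + ↑y * Complex.I))‖ := by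
  have hZ : (↑π * (↑c + ↑y * Complex.I) : ℂ) = ↑(π * c) + ↑(π * y) * Complex.I := by
    push_cast; ring
  rw [hZ]
  have hs : 0 < Real.sin (π * c) :=
    Real.sin_pos_of_pos_of_lt_pi (by positivity) (by nlinarith [Real.pi_pos])
  calc Real.sin (π * c) * ((1 + y ^ 2) / 2)
      ≤ Real.sin (π * c) * Real.cosh (π * y) := by
        have := one_add_sq_le_two_cosh y
        nlinarith
    _ ≤ _ := norm_sin_lower _ _

lemma sin_pi_ne {c : ℝ} (hc0 : 0 < c) (hc1 : c < 1) (y : ℝ) :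
    Complex.sin (↑π * (↑c + ↑y * Complex.I)) ≠ 0 := by
  have h := norm_sin_pi_lower hc0 hc1 y
  have hs : 0 < Real.sin (π * c) :=
    Real.sin_pos_of_pos_of_lt_pi (by positivity) (by nlinarith [Real.pi_pos])
  intro h0
  rw [h0] at h
  simp only [norm_zero] at h
  nlinarith [sq_nonneg y]

lemma norm_pi_div_sin_le {c : ℝ} (hc0 : 0 < c) (hc1 : c < 1) (y : ℝ) :
    ‖(↑π / Complex.sin (↑π * (↑c + ↑y * Complex.I)) : ℂ)‖ ≤
      2 * π / Real.sin (π * c) * (1 + y ^ 2)⁻¹ := by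
  have hs : 0 < Real.sin (π * c) :=
    Real.sin_pos_of_pos_of_lt_pi (by positivity) (by nlinarith [Real.pi_pos])
  have hlow := norm_sin_pi_lower hc0 hc1 y
  have hpos : 0 < Real.sin (π * c) * ((1 + y ^ 2) / 2) := by positivity
  rw [norm_div, Complex.norm_real, Real.norm_eq_abs, abs_of_pos Real.pi_pos]
  calc π / ‖Complex.sin (↑π * (↑c + ↑y * Complex.I))‖
      ≤ π / (Real.sin (π * c) * ((1 + y ^ 2) / 2)) := by
        apply div_le_div_of_nonneg_left Real.pi_pos.le hpos hlow
    _ = 2 * π / Real.sin (π * c) * (1 + y ^ 2)⁻¹ := by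
        field_simp





-- the substitution map
private def φ (u : ℝ) : ℝ := u / (1 - u)

lemma φ_deriv {u : ℝ} (hu : u ∈ Ioo (0:ℝ) 1) :
    HasDerivWithinAt φ (((1 - u) ^ 2)⁻¹) (Ioo (0:ℝ) 1) u := by
  have h1 : (1:ℝ) - u ≠ 0 := by rcases hu with ⟨h0, h1⟩; intro h; linarith [sub_eq_zero.mp h]
  have := (hasDerivAt_id u).div ((hasDerivAt_id u).const_sub 1) h1
  have h2 : (1 * (1 - id u) - id u * -1) / (1 - id u) ^ 2 = ((1 - u) ^ 2)⁻¹ := by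
    simp only [id]; field_simp; ring
  rw [h2] at this
  exact this.hasDerivWithinAt

lemma φ_inj : InjOn φ (Ioo (0:ℝ) 1) := by
  intro a ha b hb h
  have h1 : (1:ℝ) - a ≠ 0 := by intro h'; rcases ha with ⟨_, h2⟩; linarith [sub_eq_zero.mp h']
  have h2 : (1:ℝ) - b ≠ 0 := by intro h'; rcases hb with ⟨_, h2⟩; linarith [sub_eq_zero.mp h']
  unfold φ at h
  rw [div_eq_div_iff h1 h2] at h
  nlinarith [h]

lemma φ_image : φ '' (Ioo (0:ℝ) 1) = Ioi (0:ℝ) := by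
  ext x
  constructor
  · rintro ⟨u, ⟨h0, h1⟩, rfl⟩
    exact div_pos h0 (by linarith)
  · intro hx
    have hx' : (0:ℝ) < x := hx
    refine ⟨x / (1 + x), ⟨by positivity, ?_⟩, ?_⟩
    · rw [div_lt_one (by positivity : (0:ℝ) < 1 + x)]; linarith
    · unfold φ
      have hx1 : (1:ℝ) + x ≠ 0 := by positivity
      field_simp; ring




lemma pointwise {w : ℂ} {u : ℝ} (hu : u ∈ Ioo (0:ℝ) 1) :
    |((1 - u) ^ 2)⁻¹| • (((φ u : ℝ) : ℂ) ^ (w - 1) • (1 + ((φ u : ℝ) : ℂ))⁻¹)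
      = (u : ℂ) ^ (w - 1) * (1 - (u : ℂ)) ^ (-w) := by
  obtain ⟨h0, h1⟩ := hu
  have h1u : (0:ℝ) < 1 - u := by linarith
  have hφ : (0:ℝ) < φ u := div_pos h0 h1u
  have hsumr : (1:ℝ) + φ u = (1 - u)⁻¹ := by unfold φ; field_simp; ring
  have hsum : (1 + ((φ u : ℝ) : ℂ)) = (((1 - u)⁻¹ : ℝ) : ℂ) := by
    rw [← hsumr]; push_cast; ring
  have hlogφ : Real.log (φ u) = Real.log u - Real.log (1 - u) :=
    Real.log_div h0.ne' h1u.ne'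
  have habs : |((1 - u) ^ 2)⁻¹| = ((1 - u) ^ 2)⁻¹ := abs_of_pos (by positivity)
  have e1 : (((1 - u) ^ 2)⁻¹ : ℝ) = Real.exp (-(2 * Real.log (1 - u))) := by
    rw [Real.exp_neg, two_mul, Real.exp_add, Real.exp_log h1u, ← sq]
  have e2 : ((1 - u)⁻¹ : ℝ)⁻¹ = Real.exp (Real.log (1 - u)) := by
    rw [inv_inv, Real.exp_log h1u]
  rw [habs, hsum, cpow_pos_eq (φ u) hφ, hlogφ]
  rw [show ((1:ℂ) - (u:ℂ)) = (((1 - u : ℝ)) : ℂ) by push_cast; ring]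
  rw [cpow_pos_eq u h0, cpow_pos_eq (1 - u) h1u]
  rw [← Complex.ofReal_inv, e2, e1]
  rw [smul_eq_mul, Complex.real_smul, Complex.ofReal_exp, Complex.ofReal_exp]
  rw [← Complex.exp_add, ← Complex.exp_add, ← Complex.exp_add]
  congr 1
  push_cast
  ring

lemma beta_integrand_eq (w : ℂ) :
    (fun u : ℝ => (u : ℂ) ^ (w - 1) * (1 - (u : ℂ)) ^ (1 - w - 1))
      = fun u : ℝ => (u : ℂ) ^ (w - 1) * (1 - (u : ℂ)) ^ (-w) := by
  funext u; congr 1; ring_nf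

lemma mellin_value {w : ℂ} (h0 : 0 < w.re) (h1 : w.re < 1) :
    mellin (fun x : ℝ => (1 + (x : ℂ))⁻¹) w = ↑π / Complex.sin (↑π * w) := by
  have key : mellin (fun x : ℝ => (1 + (x : ℂ))⁻¹) w
      = ∫ u in Ioo (0:ℝ) 1, (u : ℂ) ^ (w - 1) * (1 - (u : ℂ)) ^ (-w) := by
    rw [mellin, ← φ_image,
      integral_image_eq_integral_abs_deriv_smul measurableSet_Ioo
        (fun u hu => φ_deriv hu) φ_inj]
    exact setIntegral_congr_fun measurableSet_Ioo (fun u hu => pointwise hu)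
  have h2 : 0 < (1 - w).re := by
    simp only [Complex.sub_re, Complex.one_re]; linarith
  have hbeta : Complex.betaIntegral w (1 - w)
      = ∫ u in Ioo (0:ℝ) 1, (u : ℂ) ^ (w - 1) * (1 - (u : ℂ)) ^ (-w) := by
    rw [Complex.betaIntegral, intervalIntegral.integral_of_le zero_le_one,
      MeasureTheory.integral_Ioc_eq_integral_Ioo, beta_integrand_eq]
  rw [key, ← hbeta]
  have hg := Complex.Gamma_mul_Gamma_eq_betaIntegral h0 h2
  rw [show w + (1 - w) = 1 by ring, Complex.Gamma_one, one_mul] at hg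
  rw [← hg, Complex.Gamma_mul_Gamma_one_sub]

lemma mellin_conv {w : ℂ} (h0 : 0 < w.re) (h1 : w.re < 1) :
    MellinConvergent (fun x : ℝ => (1 + (x : ℂ))⁻¹) w := by
  have h2 : 0 < (1 - w).re := by
    simp only [Complex.sub_re, Complex.one_re]; linarith
  have hb : IntegrableOn (fun u : ℝ => (u : ℂ) ^ (w - 1) * (1 - (u : ℂ)) ^ (-w))
      (Ioo (0:ℝ) 1) := by
    have := (intervalIntegrable_iff_integrableOn_Ioc_of_le zero_le_one).mp
      (Complex.betaIntegral_convergent h0 h2)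
    rw [beta_integrand_eq] at this
    exact this.mono_set Ioo_subset_Ioc_self
  have : IntegrableOn (fun t : ℝ => (t : ℂ) ^ (w - 1) • (1 + (t : ℂ))⁻¹) (Ioi (0:ℝ)) := by
    rw [← φ_image,
      integrableOn_image_iff_integrableOn_abs_deriv_smul measurableSet_Ioo
        (fun u hu => φ_deriv hu) φ_inj]
    exact hb.congr_fun (fun u hu => (pointwise hu).symm) measurableSet_Ioo
  exact this


lemma vert_int {c : ℝ} (hc0 : 0 < c) (hc1 : c < 1) :
    Integrable (fun y : ℝ => (↑π / Complex.sin (↑π * (↑c + ↑y * Complex.I)) : ℂ)) := by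
  apply MeasureTheory.Integrable.mono'
    ((integrable_inv_one_add_sq).const_mul (2 * π / Real.sin (π * c)))
  · apply Continuous.aestronglyMeasurable
    apply continuous_const.div
    · exact Complex.continuous_sin.comp (by continuity)
    · exact fun y => sin_pi_ne hc0 hc1 y
  · filter_upwards with y
    exact norm_pi_div_sin_le hc0 hc1 y

lemma key_integral {c : ℝ} (hc0 : 0 < c) (hc1 : c < 1) {x : ℝ} (hx : 0 < x) :
    ∫ y : ℝ, (x : ℂ) ^ (-(↑c + ↑y * Complex.I)) *
      (↑π / Complex.sin (↑π * (↑c + ↑y * Complex.I)))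
      = 2 * ↑π * (1 + (x : ℂ))⁻¹ := by
  have hre : ∀ y : ℝ, ((↑c + ↑y * Complex.I : ℂ)).re = c := by intro y; simp
  have hmel : ∀ y : ℝ, mellin (fun x : ℝ => (1 + (x : ℂ))⁻¹) (↑c + ↑y * Complex.I)
      = ↑π / Complex.sin (↑π * (↑c + ↑y * Complex.I)) := fun y =>
    mellin_value (by rw [hre]; exact hc0) (by rw [hre]; exact hc1)
  have hconv : MellinConvergent (fun x : ℝ => (1 + (x : ℂ))⁻¹) ↑c :=
    mellin_conv (by simpa using hc0) (by simpa using hc1)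
  have hvert : Complex.VerticalIntegrable (mellin (fun x : ℝ => (1 + (x : ℂ))⁻¹)) c := by
    refine (vert_int hc0 hc1).congr (ae_of_all _ fun y => ?_)
    exact (hmel y).symm
  have hcont : ContinuousAt (fun x : ℝ => (1 + (x : ℂ))⁻¹) x := by
    apply ContinuousAt.inv₀
    · exact (continuous_const.add Complex.continuous_ofReal).continuousAt
    · intro h
      have : ((1 + x : ℝ) : ℂ) = 0 := by push_cast; linear_combination h
      have := Complex.ofReal_eq_zero.mp this
      linarith
  have hinv := mellinInv_mellin_eq c (fun x : ℝ => (1 + (x : ℂ))⁻¹) hx hconv hvert hcont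
  rw [mellinInv] at hinv
  have hrw : ∫ y : ℝ, (x : ℂ) ^ (-(↑c + ↑y * Complex.I)) •
      mellin (fun x : ℝ => (1 + (x : ℂ))⁻¹) (↑c + ↑y * Complex.I)
      = ∫ y : ℝ, (x : ℂ) ^ (-(↑c + ↑y * Complex.I)) *
        (↑π / Complex.sin (↑π * (↑c + ↑y * Complex.I))) := by
    congr 1; funext y; rw [hmel y, smul_eq_mul]
  rw [hrw] at hinv
  have hπ : (π : ℝ) ≠ 0 := Real.pi_ne_zero
  rw [Complex.real_smul] at hinv
  rw [← hinv]
  push_cast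
  have hπC : (π : ℂ) ≠ 0 := by exact_mod_cast hπ
  set J := (∫ y : ℝ, (x : ℂ) ^ (-(↑c + ↑y * Complex.I)) *
    (↑π / Complex.sin (↑π * (↑c + ↑y * Complex.I)))) with hJ
  field_simp


/-- n-th term of the Dirichlet expansion of the integrand. -/
def Tn (σ t : ℝ) (n : ℕ) (s : ℝ) : ℂ :=
  Complex.exp (Complex.I * ((s : ℂ) - Complex.I * σ) / 2 * Real.log (t / (2 * π))) *
    (1 / ((n : ℂ) + 1) ^ (1/2 + (σ : ℂ) + Complex.I * ((t : ℂ) + s))) *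
    ((π : ℂ) / (2 * Complex.sinh ((π : ℂ) * ((s : ℂ) - Complex.I * σ) / 2)))

lemma Tn_eq {σ t : ℝ} (hσ1 : 1/2 < σ) (hσ2 : σ < 2) (ht : 0 < t) (n : ℕ) (s : ℝ) :
    Tn σ t n s = (Complex.I / 2 *
      Complex.exp ((-(1/2 : ℂ) - Complex.I * t) * Real.log ((n : ℝ) + 1))) *
      ((((2 * π * ((n : ℝ) + 1) ^ 2 / t : ℝ)) : ℂ) ^ (-((↑(σ/2) : ℂ) + ↑(s/2) * Complex.I)) *
        (↑π / Complex.sin (↑π * (↑(σ/2) + ↑(s/2) * Complex.I)))) := by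
  have hc0 : 0 < σ/2 := by linarith
  have hc1 : σ/2 < 1 := by linarith
  have hn1 : (0:ℝ) < (n:ℝ) + 1 := by positivity
  have hxn : (0:ℝ) < 2 * π * ((n:ℝ) + 1) ^ 2 / t := by positivity
  have hlog1 : Real.log (t / (2*π)) = Real.log t - Real.log (2*π) :=
    Real.log_div ht.ne' (by positivity)
  have hlogxn : Real.log (2 * π * ((n:ℝ) + 1) ^ 2 / t)
      = Real.log (2*π) + 2 * Real.log ((n:ℝ) + 1) - Real.log t := by
    rw [Real.log_div (by positivity) ht.ne',
      Real.log_mul (by positivity) (by positivity), Real.log_pow]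
    push_cast; ring
  have hZ : Complex.sin (↑π * ((↑(σ/2) : ℂ) + ↑(s/2) * Complex.I)) ≠ 0 :=
    sin_pi_ne hc0 hc1 (s/2)
  -- rewrite the sinh as a sin
  have harg : ((π : ℂ) * ((s : ℂ) - Complex.I * σ) / 2) * Complex.I
      = ↑π * ((↑(σ/2) : ℂ) + ↑(s/2) * Complex.I) := by
    push_cast
    linear_combination (-(π : ℂ) * σ / 2) * Complex.I_mul_I
  have hsinh : Complex.sinh ((π : ℂ) * ((s : ℂ) - Complex.I * σ) / 2)
      = -Complex.I * Complex.sin (↑π * ((↑(σ/2) : ℂ) + ↑(s/2) * Complex.I)) := by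
    rw [← harg, Complex.sin_mul_I]
    linear_combination (Complex.sinh ((π : ℂ) * ((s : ℂ) - Complex.I * σ) / 2)) *
      Complex.I_mul_I
  have hcast : ((n : ℂ) + 1) = (((n : ℝ) + 1 : ℝ) : ℂ) := by push_cast; ring
  rw [Tn, hsinh, hcast, cpow_pos_eq _ hn1, cpow_pos_eq _ hxn]
  rw [one_div, ← Complex.exp_neg]
  have hE : Complex.exp (Complex.I * ((s : ℂ) - Complex.I * σ) / 2 * Real.log (t / (2 * π))) *
      Complex.exp (-((1/2 + (σ : ℂ) + Complex.I * ((t : ℂ) + s)) * Real.log ((n : ℝ) + 1)))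
      = Complex.exp ((-(1/2 : ℂ) - Complex.I * t) * Real.log ((n : ℝ) + 1)) *
        Complex.exp ((-((↑(σ/2) : ℂ) + ↑(s/2) * Complex.I)) *
          Real.log (2 * π * ((n:ℝ) + 1) ^ 2 / t)) := by
    rw [← Complex.exp_add, ← Complex.exp_add]
    congr 1
    rw [hlog1, hlogxn]
    push_cast
    linear_combination ((-(σ : ℂ)/2) * ((Real.log t : ℂ) - (Real.log (2*π) : ℂ))) *
      Complex.I_mul_I
  have hker : ((π : ℂ) / (2 * (-Complex.I *
      Complex.sin (↑π * ((↑(σ/2) : ℂ) + ↑(s/2) * Complex.I)))))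
      = Complex.I / 2 * (↑π / Complex.sin (↑π * ((↑(σ/2) : ℂ) + ↑(s/2) * Complex.I))) := by
    set S := Complex.sin (↑π * ((↑(σ/2) : ℂ) + ↑(s/2) * Complex.I)) with hS
    have hden : (2 : ℂ) * (-Complex.I * S) ≠ 0 :=
      mul_ne_zero two_ne_zero (mul_ne_zero (neg_ne_zero.mpr Complex.I_ne_zero) hZ)
    have h1 : Complex.I/2 * ((π : ℂ)/S) * (2 * (-Complex.I * S))
        = (-(Complex.I*Complex.I)) * ((π : ℂ)/S*S) := by ring
    rw [div_mul_cancel₀ _ hZ, Complex.I_mul_I] at h1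
    rw [div_eq_iff hden, h1]
    ring
  rw [hker]
  linear_combination (Complex.I / 2 *
    (↑π / Complex.sin (↑π * ((↑(σ/2) : ℂ) + ↑(s/2) * Complex.I)))) * hE



lemma integral_Tn {σ t : ℝ} (hσ1 : 1/2 < σ) (hσ2 : σ < 2) (ht : 0 < t) (n : ℕ) :
    ∫ s : ℝ, Tn σ t n s = 2 * ↑π * Complex.I *
      (Complex.exp ((-(1/2 : ℂ) - Complex.I * t) * Real.log ((n : ℝ) + 1)) *
        ((t : ℂ) / (2 * ↑π * ((n : ℂ) + 1) ^ 2 + ↑t))) := by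
  have hc0 : 0 < σ/2 := by linarith
  have hc1 : σ/2 < 1 := by linarith
  have hxn : (0:ℝ) < 2 * π * ((n:ℝ) + 1) ^ 2 / t := by positivity
  set x : ℝ := 2 * π * ((n:ℝ) + 1) ^ 2 / t with hx
  set C : ℂ := Complex.I / 2 *
      Complex.exp ((-(1/2 : ℂ) - Complex.I * t) * Real.log ((n : ℝ) + 1)) with hC
  set H : ℝ → ℂ := fun y => ((x : ℝ) : ℂ) ^ (-((↑(σ/2) : ℂ) + ↑y * Complex.I)) *
      (↑π / Complex.sin (↑π * (↑(σ/2) + ↑y * Complex.I))) with hH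
  have h1 : ∀ s : ℝ, Tn σ t n s = C * H (s/2) := fun s => Tn_eq hσ1 hσ2 ht n s
  calc ∫ s : ℝ, Tn σ t n s = ∫ s : ℝ, C * H (s/2) := by
        congr 1; funext s; exact h1 s
    _ = C * ∫ s : ℝ, H (s/2) := integral_const_mul C _
    _ = C * ((2:ℝ) • ∫ y : ℝ, H y) := by
        rw [MeasureTheory.Measure.integral_comp_div H 2, abs_of_pos (by norm_num : (0:ℝ) < 2)]
    _ = C * (2 * (2 * ↑π * (1 + (x : ℂ))⁻¹)) := by
        rw [key_integral hc0 hc1 hxn, Complex.real_smul, Complex.ofReal_ofNat]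
    _ = _ := by
        have hinv : (1 + ((x : ℝ) : ℂ))⁻¹ = (t : ℂ) / (2 * ↑π * ((n : ℂ) + 1) ^ 2 + ↑t) := by
          have hxc : ((x : ℝ) : ℂ) = 2 * ↑π * ((n : ℂ) + 1) ^ 2 / ↑t := by
            rw [hx]; push_cast; ring
          rw [hxc]
          have htne : (t : ℂ) ≠ 0 := by exact_mod_cast ht.ne'
          rw [show (1 : ℂ) + 2 * ↑π * ((n : ℂ) + 1) ^ 2 / ↑t
              = (2 * ↑π * ((n : ℂ) + 1) ^ 2 + ↑t) / ↑t by field_simp; ring, inv_div]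
        rw [hinv, hC]
        ring



lemma H_integrable {c x : ℝ} (hc0 : 0 < c) (hc1 : c < 1) (hx : 0 < x) :
    Integrable (fun y : ℝ => ((x : ℝ) : ℂ) ^ (-((c : ℂ) + ↑y * Complex.I)) *
      (↑π / Complex.sin (↑π * ((c : ℂ) + ↑y * Complex.I)))) := by
  have hnormX : ∀ y : ℝ, ‖((x : ℝ) : ℂ) ^ (-((c : ℂ) + ↑y * Complex.I))‖
      = x ^ (-c : ℝ) := by
    intro y
    rw [Complex.norm_cpow_eq_rpow_re_of_pos hx]
    congr 1
    simp
  apply Integrable.mono'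
    ((integrable_inv_one_add_sq).const_mul (x ^ (-c : ℝ) * (2 * π / Real.sin (π * c))))
  · have c1 : Continuous (fun y : ℝ => ((x : ℝ) : ℂ) ^ (-((c : ℂ) + ↑y * Complex.I))) := by
      rw [show (fun y : ℝ => ((x : ℝ) : ℂ) ^ (-((c : ℂ) + ↑y * Complex.I)))
          = fun y : ℝ => Complex.exp ((-((c : ℂ) + ↑y * Complex.I)) * Real.log x) from
        funext fun y => cpow_pos_eq x hx _]
      exact Complex.continuous_exp.comp (by continuity)
    have c2 : Continuous (fun y : ℝ =>
        ((π : ℂ) / Complex.sin (↑π * ((c : ℂ) + ↑y * Complex.I)))) := by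
      apply continuous_const.div (Complex.continuous_sin.comp (by continuity))
      exact fun y => sin_pi_ne hc0 hc1 y
    exact (c1.mul c2).aestronglyMeasurable
  · filter_upwards with y
    rw [norm_mul, hnormX y]
    calc x ^ (-c : ℝ) * ‖(↑π / Complex.sin (↑π * ((c : ℂ) + ↑y * Complex.I)) : ℂ)‖
        ≤ x ^ (-c : ℝ) * (2 * π / Real.sin (π * c) * (1 + y ^ 2)⁻¹) := by
          gcongr
          · exact norm_pi_div_sin_le hc0 hc1 y
      _ = x ^ (-c : ℝ) * (2 * π / Real.sin (π * c)) * (1 + y ^ 2)⁻¹ := by ring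

lemma Tn_integrable {σ t : ℝ} (hσ1 : 1/2 < σ) (hσ2 : σ < 2) (ht : 0 < t) (n : ℕ) :
    Integrable (fun s : ℝ => Tn σ t n s) := by
  have hc0 : 0 < σ/2 := by linarith
  have hc1 : σ/2 < 1 := by linarith
  have hxn : (0:ℝ) < 2 * π * ((n:ℝ) + 1) ^ 2 / t := by positivity
  rw [show (fun s : ℝ => Tn σ t n s) = fun s : ℝ => (Complex.I / 2 *
      Complex.exp ((-(1/2 : ℂ) - Complex.I * t) * Real.log ((n : ℝ) + 1))) *
      ((((2 * π * ((n : ℝ) + 1) ^ 2 / t : ℝ)) : ℂ) ^ (-((↑(σ/2) : ℂ) + ↑(s/2) * Complex.I)) *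
        (↑π / Complex.sin (↑π * (↑(σ/2) + ↑(s/2) * Complex.I)))) from
    funext fun s => Tn_eq hσ1 hσ2 ht n s]
  exact ((H_integrable hc0 hc1 hxn).comp_div (two_ne_zero)).const_mul _

lemma Tn_bound {σ t : ℝ} (hσ1 : 1/2 < σ) (hσ2 : σ < 2) (ht : 0 < t) (n : ℕ) (s : ℝ) :
    ‖Tn σ t n s‖ ≤ (Real.exp ((σ/2) * (Real.log t - Real.log (2*π))) *
      (4 * π / Real.sin (π * (σ/2)))) * (((n:ℝ) + 1) ^ (-(1/2 + σ) : ℝ)) * (1 + s ^ 2)⁻¹ := by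
  have hc0 : 0 < σ/2 := by linarith
  have hc1 : σ/2 < 1 := by linarith
  have hn1 : (0:ℝ) < (n:ℝ) + 1 := by positivity
  have hxn : (0:ℝ) < 2 * π * ((n:ℝ) + 1) ^ 2 / t := by positivity
  have hsin : 0 < Real.sin (π * (σ/2)) :=
    Real.sin_pos_of_pos_of_lt_pi (by positivity) (by nlinarith [Real.pi_pos])
  have hlogxn : Real.log (2 * π * ((n:ℝ) + 1) ^ 2 / t)
      = Real.log (2*π) + 2 * Real.log ((n:ℝ) + 1) - Real.log t := by
    rw [Real.log_div (by positivity) ht.ne',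
      Real.log_mul (by positivity) (by positivity), Real.log_pow]
    push_cast; ring
  have hnormC : ‖Complex.exp ((-(1/2 : ℂ) - Complex.I * t) * ↑(Real.log ((n:ℝ) + 1)))‖
      = Real.exp (-(1/2) * Real.log ((n:ℝ) + 1)) := by
    rw [Complex.norm_exp]
    congr 1
    simp [Complex.mul_re]
  have hnormX : ‖(((2 * π * ((n:ℝ) + 1) ^ 2 / t : ℝ)) : ℂ) ^
      (-((↑(σ/2) : ℂ) + ↑(s/2) * Complex.I))‖
      = (2 * π * ((n:ℝ) + 1) ^ 2 / t) ^ (-(σ/2) : ℝ) := by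
    rw [Complex.norm_cpow_eq_rpow_re_of_pos hxn]
    congr 1
    simp
  have hax : Real.exp (-(1/2) * Real.log ((n:ℝ) + 1)) *
      (2 * π * ((n:ℝ) + 1) ^ 2 / t) ^ (-(σ/2) : ℝ)
      = Real.exp ((σ/2) * (Real.log t - Real.log (2*π))) * ((n:ℝ) + 1) ^ (-(1/2 + σ) : ℝ) := by
    rw [Real.rpow_def_of_pos hxn, Real.rpow_def_of_pos hn1, hlogxn,
      ← Real.exp_add, ← Real.exp_add]
    congr 1
    ring
  rw [Tn_eq hσ1 hσ2 ht n s, norm_mul, norm_mul, norm_mul, hnormC, hnormX]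
  have hI2 : ‖(Complex.I / 2 : ℂ)‖ = 1/2 := by
    rw [norm_div, Complex.norm_I, Complex.norm_two]
  rw [hI2]
  calc 1/2 * Real.exp (-(1/2) * Real.log ((n:ℝ) + 1)) *
      ((2 * π * ((n:ℝ) + 1) ^ 2 / t) ^ (-(σ/2) : ℝ) *
        ‖(↑π / Complex.sin (↑π * (↑(σ/2) + ↑(s/2) * Complex.I)) : ℂ)‖)
      ≤ 1/2 * Real.exp (-(1/2) * Real.log ((n:ℝ) + 1)) *
        ((2 * π * ((n:ℝ) + 1) ^ 2 / t) ^ (-(σ/2) : ℝ) *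
          (2 * π / Real.sin (π * (σ/2)) * (4 * (1 + s ^ 2)⁻¹))) := by
        gcongr
        · calc ‖(↑π / Complex.sin (↑π * (↑(σ/2) + ↑(s/2) * Complex.I)) : ℂ)‖
              ≤ 2 * π / Real.sin (π * (σ/2)) * (1 + (s/2) ^ 2)⁻¹ :=
                norm_pi_div_sin_le hc0 hc1 (s/2)
            _ ≤ 2 * π / Real.sin (π * (σ/2)) * (4 * (1 + s ^ 2)⁻¹) := by
                gcongr 2 * π / Real.sin (π * (σ/2)) * ?_
                rw [show (4 : ℝ) * (1 + s ^ 2)⁻¹ = ((1 + s ^ 2)/4)⁻¹ by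
                    rw [inv_div]; ring]
                apply inv_anti₀
                · positivity
                · nlinarith [sq_nonneg s]
    _ = (Real.exp ((σ/2) * (Real.log t - Real.log (2*π))) *
          (4 * π / Real.sin (π * (σ/2)))) * (((n:ℝ) + 1) ^ (-(1/2 + σ) : ℝ)) *
          (1 + s ^ 2)⁻¹ := by
        linear_combination (4 * π / Real.sin (π * (σ/2)) * (1 + s ^ 2)⁻¹) * hax




lemma Gker_eq_tsum {σ t : ℝ} (hσ1 : 1/2 < σ) (hσ2 : σ < 2) (ht : 0 < t) (s : ℝ) :
    Gker σ t s = ∑' n : ℕ, Tn σ t n s := by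
  have hre : 1 < ((1/2 : ℂ) + σ + Complex.I * ((t : ℂ) + s)).re := by
    simp only [Complex.add_re, Complex.one_re, Complex.ofReal_re, Complex.mul_re,
      Complex.I_re, Complex.I_im, Complex.add_im, Complex.ofReal_im, Complex.div_re]
    norm_num
    linarith
  rw [Gker, zeta_eq_tsum_one_div_nat_add_one_cpow hre, mul_assoc, ← tsum_mul_right,
    ← tsum_mul_left]
  exact tsum_congr fun n => by rw [Tn]; ring

lemma summable_pow {σ : ℝ} (hσ1 : 1/2 < σ) :
    Summable (fun n : ℕ => ((n:ℝ) + 1) ^ (-(1/2 + σ) : ℝ)) := by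
  have hp : (-(1/2 + σ) : ℝ) < -1 := by linarith
  have h2 := (summable_nat_add_iff 1).mpr (Real.summable_nat_rpow.mpr hp)
  exact h2.congr fun n => by rw [show (((n+1 : ℕ)) : ℝ) = (n:ℝ) + 1 by push_cast; ring]

lemma summable_integral_norm {σ t : ℝ} (hσ1 : 1/2 < σ) (hσ2 : σ < 2) (ht : 0 < t) :
    Summable (fun n : ℕ => ∫ s : ℝ, ‖Tn σ t n s‖) := by
  set A : ℝ := Real.exp ((σ/2) * (Real.log t - Real.log (2*π))) *
      (4 * π / Real.sin (π * (σ/2))) with hA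
  set Iinv : ℝ := ∫ s : ℝ, (1 + s ^ 2)⁻¹ with hIinv
  refine Summable.of_nonneg_of_le (fun n => integral_nonneg fun s => norm_nonneg _)
    (fun n => ?_) ((summable_pow hσ1).mul_left (A * Iinv))
  calc ∫ s : ℝ, ‖Tn σ t n s‖
        ≤ ∫ s : ℝ, (A * ((n:ℝ) + 1) ^ (-(1/2 + σ) : ℝ)) * (1 + s ^ 2)⁻¹ := by
          apply integral_mono (Tn_integrable hσ1 hσ2 ht n).norm
            ((integrable_inv_one_add_sq).const_mul _)
          intro s
          have := Tn_bound hσ1 hσ2 ht n s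
          calc ‖Tn σ t n s‖ ≤ A * ((n:ℝ) + 1) ^ (-(1/2 + σ) : ℝ) * (1 + s ^ 2)⁻¹ := this
            _ = (A * ((n:ℝ) + 1) ^ (-(1/2 + σ) : ℝ)) * (1 + s ^ 2)⁻¹ := by ring
      _ = (A * ((n:ℝ) + 1) ^ (-(1/2 + σ) : ℝ)) * Iinv := integral_const_mul _ _
      _ = (A * Iinv) * ((n:ℝ) + 1) ^ (-(1/2 + σ) : ℝ) := by ring





end Stmt13

open Stmt13 in
theorem stmt_13 (σ : ℝ) (hσ : σ ∈ Ioo (1/2 : ℝ) 2) (t : ℝ) (ht : 0 < t) :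
    Summable (fun n : ℕ =>
      Complex.exp ((-(1/2 : ℂ) - Complex.I * t) * Real.log (n + 1)) *
        ((t : ℂ) / (2 * π * ((n : ℂ) + 1) ^ 2 + t))) ∧
    G σ t = ∑' n : ℕ,
      Complex.exp ((-(1/2 : ℂ) - Complex.I * t) * Real.log (n + 1)) *
        ((t : ℂ) / (2 * π * ((n : ℂ) + 1) ^ 2 + t)) := by
  obtain ⟨hσ1, hσ2⟩ := hσ
  constructor
  · apply Summable.of_norm_bounded
      (g := fun n : ℕ => (t / (2*π)) * (((n:ℝ) + 1) ^ 2)⁻¹)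
    · apply Summable.mul_left
      have h2 := (summable_nat_add_iff 1).mpr
        (Real.summable_nat_pow_inv.mpr (one_lt_two : (1:ℕ) < 2))
      exact h2.congr fun n => by
        rw [show (((n+1 : ℕ)) : ℝ) = (n:ℝ) + 1 by push_cast; ring]
    · intro n
      have hn1 : (0:ℝ) < (n:ℝ) + 1 := by positivity
      have hden : (0:ℝ) < 2 * π * ((n:ℝ) + 1) ^ 2 + t := by positivity
      rw [norm_mul]
      have h1 : ‖Complex.exp ((-(1/2 : ℂ) - Complex.I * t) * Real.log ((n:ℝ) + 1))‖ ≤ 1 := by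
        rw [Complex.norm_exp]
        rw [Real.exp_le_one_iff]
        have hre : ((-(1/2 : ℂ) - Complex.I * t) * ↑(Real.log ((n:ℝ) + 1))).re
            = -(1/2) * Real.log ((n:ℝ) + 1) := by simp [Complex.mul_re]
        rw [hre]
        have := Real.log_nonneg (by linarith : (1:ℝ) ≤ (n:ℝ) + 1)
        nlinarith
      have h2 : ‖((t : ℂ) / (2 * ↑π * ((n : ℂ) + 1) ^ 2 + ↑t))‖
          ≤ (t / (2*π)) * (((n:ℝ) + 1) ^ 2)⁻¹ := by
        have hcast : ((t : ℂ) / (2 * ↑π * ((n : ℂ) + 1) ^ 2 + ↑t))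
            = (((t / (2 * π * ((n:ℝ) + 1) ^ 2 + t)) : ℝ) : ℂ) := by
          push_cast; ring
        rw [hcast, Complex.norm_real, Real.norm_eq_abs,
          abs_of_pos (by positivity)]
        rw [div_le_iff₀ hden]
        have hππ : 0 < π := Real.pi_pos
        rw [mul_comm (t / (2*π)) _, mul_assoc]
        have : (((n:ℝ) + 1) ^ 2)⁻¹ * ((t / (2*π)) * (2 * π * ((n:ℝ) + 1) ^ 2 + t))
            = t + (((n:ℝ) + 1) ^ 2)⁻¹ * (t / (2*π)) * t := by
          field_simp
        rw [this]
        have hpos : 0 ≤ (((n:ℝ)+1)^2)⁻¹ * (t/(2*π)) * t := by positivity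
        linarith
      calc ‖Complex.exp ((-(1/2 : ℂ) - Complex.I * t) * Real.log ((n:ℝ) + 1))‖ *
            ‖((t : ℂ) / (2 * ↑π * ((n : ℂ) + 1) ^ 2 + ↑t))‖
          ≤ 1 * ((t / (2*π)) * (((n:ℝ) + 1) ^ 2)⁻¹) :=
            mul_le_mul h1 h2 (norm_nonneg _) zero_le_one
        _ = (t / (2*π)) * (((n:ℝ) + 1) ^ 2)⁻¹ := one_mul _
  · have hswap := MeasureTheory.integral_tsum_of_summable_integral_norm
      (fun n => Tn_integrable hσ1 hσ2 ht n) (summable_integral_norm hσ1 hσ2 ht)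
    have hGkint : ∫ s : ℝ, Gker σ t s = ∑' n : ℕ, ∫ s : ℝ, Tn σ t n s := by
      calc ∫ s : ℝ, Gker σ t s = ∫ s : ℝ, ∑' n : ℕ, Tn σ t n s := by
            congr 1; funext s; exact Gker_eq_tsum hσ1 hσ2 ht s
        _ = ∑' n : ℕ, ∫ s : ℝ, Tn σ t n s := hswap.symm
    have h2πI : (2 * (π:ℂ) * Complex.I) ≠ 0 := by
      refine mul_ne_zero (mul_ne_zero two_ne_zero ?_) Complex.I_ne_zero
      exact_mod_cast Real.pi_ne_zero
    rw [G, hGkint, ← tsum_mul_left]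
    exact tsum_congr fun n => by
      rw [integral_Tn hσ1 hσ2 ht n, ← mul_assoc, inv_mul_cancel₀ h2πI, one_mul]


end
end

section
/- Let K ≥ 1 be a natural number and let t be a complex number with |Im t| < 3/2 and t ≠ −2πn² for every integer n ≥ 1. Then both series below converge absolutely and Σ_{n=1}^∞ n^{−1/2−it} · t/(2πn² + t) = Σ_{k=1}^K (−1)^{k+1}·(t/(2π))^k·ζ(2k + 1/2 + it) + (−1)^K·(t/(2π))^K·Σ_{n=1}^∞ n^{−2K−1/2−it} · t/(2πn² + t). -/
open Complex MeasureTheory Real Set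

noncomputable section

def Faux (t c : ℂ) (n : ℕ) : ℂ :=
  Complex.exp (c * Real.log (n + 1)) * (t / (2 * π * ((n : ℂ) + 1) ^ 2 + t))

lemma norm_exp_log (c : ℂ) (n : ℕ) :
    ‖Complex.exp (c * Real.log (n + 1))‖ = ((n : ℝ) + 1) ^ c.re := by
  rw [Complex.norm_exp]
  have h : (c * (Real.log ((n:ℝ) + 1) : ℂ)).re = Real.log ((n:ℝ) + 1) * c.re := by
    simp [Complex.mul_re]; ring
  rw [h, Real.rpow_def_of_pos (by positivity)]

lemma exp_log_two (n : ℕ) :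
    Complex.exp (2 * (Real.log ((n:ℝ) + 1) : ℂ)) = ((n : ℂ) + 1) ^ 2 := by
  have h : Complex.exp ((Real.log ((n:ℝ) + 1) : ℂ)) = (n : ℂ) + 1 := by
    rw [← Complex.ofReal_exp, Real.exp_log (by positivity)]
    push_cast; ring
  rw [two_mul, Complex.exp_add, h]; ring

lemma summable_shift_rpow {r : ℝ} (hr : r < -1) :
    Summable (fun n : ℕ => ((n : ℝ) + 1) ^ r) := by
  have := (summable_nat_add_iff (f := fun n : ℕ => (n : ℝ) ^ r) 1).mpr
    (Real.summable_nat_rpow.mpr hr)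
  simpa using this

lemma Faux_summable (t c : ℂ) (hc : c.re < 1)
    (hden : ∀ n : ℕ, 2 * (π:ℂ) * ((n : ℂ) + 1) ^ 2 + t ≠ 0) :
    Summable (fun n : ℕ => ‖Faux t c n‖) := by
  have hπ : (0:ℝ) < π := Real.pi_pos
  have hsum : Summable (fun n : ℕ => (‖t‖ / π) * ((n : ℝ) + 1) ^ (c.re - 2)) :=
    (summable_shift_rpow (by linarith)).mul_left _
  refine Summable.of_norm_bounded_eventually_nat hsum ?_
  have hev : ∀ᶠ n : ℕ in Filter.atTop, ‖t‖ ≤ π * ((n : ℝ) + 1) ^ 2 := by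
    refine Filter.eventually_atTop.mpr ⟨⌈‖t‖⌉₊, fun n hn => ?_⟩
    have h1 : ‖t‖ ≤ (n:ℝ) := le_trans (Nat.le_ceil _) (by exact_mod_cast hn)
    nlinarith [Real.pi_gt_three, norm_nonneg t, sq_nonneg ((n:ℝ))]
  filter_upwards [hev] with n hn
  have hpos : (0:ℝ) < ((n:ℝ) + 1) := by positivity
  have hDnorm : π * ((n : ℝ) + 1) ^ 2 ≤ ‖2 * (π:ℂ) * ((n : ℂ) + 1) ^ 2 + t‖ := by
    have h1 : ‖(2 * (π:ℂ) * ((n : ℂ) + 1) ^ 2)‖ = 2 * π * ((n : ℝ) + 1) ^ 2 := by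
      have : (2 * (π:ℂ) * ((n : ℂ) + 1) ^ 2) = ((2 * π * ((n:ℝ) + 1) ^ 2 : ℝ) : ℂ) := by
        push_cast; ring
      rw [this, Complex.norm_real, Real.norm_of_nonneg (by positivity)]
    calc π * ((n : ℝ) + 1) ^ 2
        = 2 * π * ((n : ℝ) + 1) ^ 2 - π * ((n : ℝ) + 1) ^ 2 := by ring
      _ ≤ ‖(2 * (π:ℂ) * ((n : ℂ) + 1) ^ 2)‖ - ‖t‖ := by
          rw [h1]; have := hn; nlinarith
      _ ≤ ‖2 * (π:ℂ) * ((n : ℂ) + 1) ^ 2 + t‖ := by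
          have h2 := norm_sub_norm_le (2 * (π:ℂ) * ((n : ℂ) + 1) ^ 2) (-t)
          rw [sub_neg_eq_add, norm_neg] at h2
          linarith
  have hDpos : (0:ℝ) < ‖2 * (π:ℂ) * ((n : ℂ) + 1) ^ 2 + t‖ :=
    lt_of_lt_of_le (by positivity) hDnorm
  rw [norm_norm, Faux, norm_mul, norm_exp_log, norm_div]
  calc ((n : ℝ) + 1) ^ c.re * (‖t‖ / ‖2 * (π:ℂ) * ((n : ℂ) + 1) ^ 2 + t‖)
      ≤ ((n : ℝ) + 1) ^ c.re * (‖t‖ / (π * ((n : ℝ) + 1) ^ 2)) := by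
        gcongr
    _ = ‖t‖ / π * ((n : ℝ) + 1) ^ (c.re - 2) := by
        rw [Real.rpow_sub hpos]
        rw [show ((n:ℝ)+1) ^ (2:ℝ) = ((n:ℝ)+1) ^ (2:ℕ) by
          rw [← Real.rpow_natCast]; norm_num]
        field_simp

lemma zeta_term_eq (s : ℂ) (n : ℕ) :
    Complex.exp ((-s) * Real.log (n + 1)) = 1 / ((n : ℂ) + 1) ^ s := by
  have hne : ((n : ℂ) + 1) ≠ 0 := Nat.cast_add_one_ne_zero n
  have hlog : Complex.log ((n : ℂ) + 1) = (Real.log ((n:ℝ) + 1) : ℂ) := by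
    rw [show ((n : ℂ) + 1) = (((n:ℝ) + 1 : ℝ) : ℂ) by push_cast; ring,
      Complex.ofReal_log (by positivity)]
  rw [Complex.cpow_def_of_ne_zero hne, hlog, one_div, ← Complex.exp_neg]
  congr 1; ring

lemma zeta_term_summable {s : ℂ} (hs : 1 < s.re) :
    Summable (fun n : ℕ => Complex.exp ((-s) * Real.log (n + 1))) := by
  apply Summable.of_norm
  have : (fun n : ℕ => ‖Complex.exp ((-s) * Real.log (n + 1))‖)
      = fun n : ℕ => ((n : ℝ) + 1) ^ (-s.re) := by
    funext n; rw [norm_exp_log]; norm_num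
  rw [this]
  exact summable_shift_rpow (by linarith)

lemma zeta_sum {s : ℂ} (hs : 1 < s.re) :
    ∑' n : ℕ, Complex.exp ((-s) * Real.log (n + 1)) = riemannZeta s := by
  rw [zeta_eq_tsum_one_div_nat_add_one_cpow hs]
  refine tsum_congr fun n => ?_
  rw [zeta_term_eq]

lemma step (t : ℂ) (him : |t.im| < 3/2)
    (hden : ∀ n : ℕ, 2 * (π:ℂ) * ((n : ℂ) + 1) ^ 2 + t ≠ 0) (j : ℕ) :
    ∑' n, Faux t (-(2 * (j:ℂ)) - 1/2 - Complex.I * t) n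
      = (t / (2 * π)) * riemannZeta (2 * ((j:ℂ) + 1) + 1/2 + Complex.I * t)
        - (t / (2 * π)) * ∑' n, Faux t (-(2 * ((j:ℂ) + 1)) - 1/2 - Complex.I * t) n := by
  have him' := abs_lt.mp him
  have hπ : (π:ℂ) ≠ 0 := by exact_mod_cast Real.pi_ne_zero
  have hs : 1 < (2 * ((j:ℂ) + 1) + 1/2 + Complex.I * t).re := by
    simp [Complex.add_re, Complex.mul_re]
    have : (0:ℝ) ≤ (j:ℝ) := Nat.cast_nonneg j
    linarith
  have key : ∀ n : ℕ, Faux t (-(2 * (j:ℂ)) - 1/2 - Complex.I * t) n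
      = (t / (2 * π)) * (Complex.exp ((-(2 * ((j:ℂ) + 1) + 1/2 + Complex.I * t)) * Real.log (n + 1))
          - Faux t (-(2 * ((j:ℂ) + 1)) - 1/2 - Complex.I * t) n) := by
    intro n
    have hD := hden n
    have h2 : Complex.exp ((-(2 * (j:ℂ)) - 1/2 - Complex.I * t) * Real.log (n + 1))
        = Complex.exp ((-(2 * ((j:ℂ) + 1)) - 1/2 - Complex.I * t) * Real.log (n + 1))
          * ((n : ℂ) + 1) ^ 2 := by
      rw [← exp_log_two, ← Complex.exp_add]; congr 1; ring
    have h3 : (-(2 * ((j:ℂ) + 1) + 1/2 + Complex.I * t)) = (-(2 * ((j:ℂ) + 1)) - 1/2 - Complex.I * t) := by ring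
    rw [Faux, Faux, h2, h3]
    have hπ2 : (2 * (π:ℂ)) ≠ 0 := mul_ne_zero two_ne_zero hπ
    have hx : t / (2 * (π:ℂ) * ((n:ℂ) + 1) ^ 2 + t) * (2 * (π:ℂ) * ((n:ℂ) + 1) ^ 2 + t) = t :=
      div_mul_cancel₀ t hD
    rw [div_mul_eq_mul_div t (2 * (π:ℂ)), eq_div_iff hπ2]
    linear_combination (Complex.exp ((-(2 * ((j:ℂ) + 1)) - 1/2 - Complex.I * t) * Real.log (n + 1))) * hx
  have hre : (-(2 * ((j:ℂ) + 1)) - 1/2 - Complex.I * t).re < 1 := by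
    simp [Complex.sub_re, Complex.neg_re, Complex.mul_re]
    nlinarith [Nat.cast_nonneg (α := ℝ) j]
  rw [tsum_congr key, tsum_mul_left, Summable.tsum_sub (zeta_term_summable hs)
    (Summable.of_norm (Faux_summable t _ hre hden)), zeta_sum hs, mul_sub]

lemma main_ind (t : ℂ) (him : |t.im| < 3/2)
    (hden : ∀ n : ℕ, 2 * (π:ℂ) * ((n : ℂ) + 1) ^ 2 + t ≠ 0) (K : ℕ) :
    ∑' n, Faux t (-(2 * ((0:ℕ):ℂ)) - 1/2 - Complex.I * t) n
      = (∑ k ∈ Finset.Icc 1 K, (-1:ℂ) ^ (k+1) * (t / (2 * π)) ^ k *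
          riemannZeta (2 * (k:ℂ) + 1/2 + Complex.I * t))
        + (-1:ℂ) ^ K * (t / (2 * π)) ^ K *
          ∑' n, Faux t (-(2 * (K:ℂ)) - 1/2 - Complex.I * t) n := by
  induction K with
  | zero => simp
  | succ K ih =>
    rw [ih, Finset.sum_Icc_succ_top (by omega : 1 ≤ K + 1), step t him hden K]
    push_cast
    ring

theorem stmt_14 (K : ℕ) (hK : 1 ≤ K) (t : ℂ) (him : |t.im| < 3/2)
    (hpole : ∀ n : ℕ, 1 ≤ n → t ≠ -2 * π * (n : ℂ) ^ 2) :
    Summable (fun n : ℕ =>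
      ‖Complex.exp ((-(1/2 : ℂ) - Complex.I * t) * Real.log (n + 1)) *
        (t / (2 * π * ((n : ℂ) + 1) ^ 2 + t))‖) ∧
    Summable (fun n : ℕ =>
      ‖Complex.exp ((-(2 * K : ℂ) - 1/2 - Complex.I * t) * Real.log (n + 1)) *
        (t / (2 * π * ((n : ℂ) + 1) ^ 2 + t))‖) ∧
    (∑' n : ℕ, Complex.exp ((-(1/2 : ℂ) - Complex.I * t) * Real.log (n + 1)) *
        (t / (2 * π * ((n : ℂ) + 1) ^ 2 + t))) =
      (∑ k ∈ Finset.Icc 1 K, (-1 : ℂ) ^ (k + 1) * (t / (2 * π)) ^ k *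
          riemannZeta (2 * k + 1/2 + Complex.I * t)) +
        (-1 : ℂ) ^ K * (t / (2 * π)) ^ K *
          ∑' n : ℕ, Complex.exp ((-(2 * K : ℂ) - 1/2 - Complex.I * t) * Real.log (n + 1)) *
            (t / (2 * π * ((n : ℂ) + 1) ^ 2 + t)) := by
  have him' := abs_lt.mp him
  have hden : ∀ n : ℕ, 2 * (π:ℂ) * ((n : ℂ) + 1) ^ 2 + t ≠ 0 := by
    intro n h
    exact hpole (n+1) (by omega) (by push_cast; linear_combination h)
  refine ⟨?_, ?_, ?_⟩
  · exact Faux_summable t (-(1/2 : ℂ) - Complex.I * t)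
      (by simp [Complex.sub_re, Complex.neg_re, Complex.mul_re]; linarith) hden
  · exact Faux_summable t (-(2 * (K:ℂ)) - 1/2 - Complex.I * t)
      (by simp [Complex.sub_re, Complex.neg_re, Complex.mul_re]
          nlinarith [Nat.cast_nonneg (α := ℝ) K]) hden
  · have H := main_ind t him hden K
    have hc : (-(2 * ((0:ℕ):ℂ)) - 1/2 - Complex.I * t) = (-(1/2 : ℂ) - Complex.I * t) := by
      push_cast; ring
    rw [hc] at H
    exact H
end
end

section
/- Let t be a complex number with |t| < 2π and Im t < 3/2. Then both series below converge and Σ_{n=1}^∞ n^{−1/2−it} · t/(2πn² + t) = Σ_{k=1}^∞ (−1)^{k+1}·(t/(2π))^k·ζ(2k + 1/2 + it). -/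
open Complex MeasureTheory Real Set

noncomputable section

set_option maxHeartbeats 1000000

theorem stmt_16 (t : ℂ) (habs : ‖t‖ < 2 * π) (him : t.im < 3/2) :
    Summable (fun n : ℕ =>
      Complex.exp ((-(1/2 : ℂ) - Complex.I * t) * Real.log (n + 1)) *
        (t / (2 * π * ((n : ℂ) + 1) ^ 2 + t))) ∧
    Summable (fun k : ℕ =>
      (-1 : ℂ) ^ k * (t / (2 * π)) ^ (k + 1) *
        riemannZeta (2 * (k + 1) + 1/2 + Complex.I * t)) ∧
    (∑' n : ℕ, Complex.exp ((-(1/2 : ℂ) - Complex.I * t) * Real.log (n + 1)) *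
        (t / (2 * π * ((n : ℂ) + 1) ^ 2 + t))) =
      ∑' k : ℕ, (-1 : ℂ) ^ k * (t / (2 * π)) ^ (k + 1) *
        riemannZeta (2 * (k + 1) + 1/2 + Complex.I * t) := by
  have hπ : (0:ℝ) < π := Real.pi_pos
  have h2π : (0:ℝ) < 2*π := by positivity
  set q : ℝ := ‖t‖ / (2 * π) with hq_def
  have hq0 : 0 ≤ q := by positivity
  have hq1 : q < 1 := (div_lt_one h2π).mpr habs
  set s : ℕ → ℂ := fun k => 2 * ((k:ℂ) + 1) + 1/2 + Complex.I * t with hs_def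
  set F : ℕ → ℕ → ℂ :=
    fun k n => (-1)^k * (t / (2 * (π:ℂ)))^(k+1) * (1 / ((n:ℂ) + 1) ^ (s k)) with hF_def
  have hsre : ∀ k : ℕ, (s k).re = 2*(k:ℝ) + 5/2 - t.im := by
    intro k
    simp [hs_def, Complex.add_re, Complex.mul_re]
    ring
  have hsre1 : ∀ k : ℕ, 1 < (s k).re := by
    intro k
    rw [hsre]
    have : (0:ℝ) ≤ (k:ℝ) := Nat.cast_nonneg k
    linarith
  -- norm computation
  have hnorm : ∀ k n : ℕ, ‖F k n‖ = q^(k+1) * ((n:ℝ)+1) ^ (-(s k).re) := by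
    intro k n
    have hb : ((n:ℂ) + 1) = (((n:ℝ) + 1 : ℝ) : ℂ) := by push_cast; ring
    have hbpos : (0:ℝ) < (n:ℝ) + 1 := by positivity
    have h1 : ‖((n:ℂ) + 1) ^ (s k)‖ = ((n:ℝ)+1) ^ ((s k).re) := by
      rw [hb, Complex.norm_cpow_eq_rpow_re_of_pos hbpos]
    have h2 : ‖t / (2 * (π:ℂ))‖ = q := by
      rw [show (2*(π:ℂ)) = ((2*π:ℝ):ℂ) by push_cast; ring, norm_div, Complex.norm_real,
        Real.norm_of_nonneg h2π.le, hq_def]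
    have hnormv : ‖F k n‖ = ‖t/(2*(π:ℂ))‖^(k+1) * (1 / ‖((n:ℂ)+1)^(s k)‖) := by
      rw [hF_def]
      simp [norm_mul, norm_pow, norm_div]
    rw [hnormv, h1, h2, Real.rpow_neg hbpos.le, one_div]
  have hbound : ∀ k n : ℕ, ‖F k n‖ ≤ q^(k+1) * ((n:ℝ)+1) ^ (t.im - 5/2 : ℝ) := by
    intro k n
    rw [hnorm]
    have h1 : (1:ℝ) ≤ (n:ℝ) + 1 := by
      have : (0:ℝ) ≤ (n:ℝ) := Nat.cast_nonneg n
      linarith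
    refine mul_le_mul_of_nonneg_left ?_ (by positivity)
    apply Real.rpow_le_rpow_of_exponent_le h1
    rw [hsre]
    have : (0:ℝ) ≤ (k:ℝ) := Nat.cast_nonneg k
    linarith
  have hS : Summable (fun n : ℕ => ((n:ℝ)+1) ^ (t.im - 5/2 : ℝ)) := by
    have h0 : Summable (fun n : ℕ => (n:ℝ) ^ (t.im - 5/2 : ℝ)) :=
      Real.summable_nat_rpow.2 (by linarith)
    have h2 := (summable_nat_add_iff 1).2 h0
    refine h2.congr fun n => ?_
    push_cast
    ring_nf
  have hfib : ∀ k, Summable (fun n => ‖F k n‖) := by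
    intro k
    exact Summable.of_nonneg_of_le (fun n => norm_nonneg _) (hbound k)
      (hS.mul_left (q^(k+1)))
  have htsum_le : ∀ k, (∑' n, ‖F k n‖) ≤
      q^(k+1) * (∑' n : ℕ, ((n:ℝ)+1) ^ (t.im - 5/2 : ℝ)) := by
    intro k
    rw [← tsum_mul_left]
    exact Summable.tsum_le_tsum (hbound k) (hfib k) (hS.mul_left _)
  have hFnorm : Summable (fun p : ℕ × ℕ => ‖F p.1 p.2‖) := by
    refine (summable_prod_of_nonneg (fun p => norm_nonneg _)).2 ⟨fun k => hfib k, ?_⟩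
    refine Summable.of_nonneg_of_le (fun k => tsum_nonneg fun n => norm_nonneg _)
      htsum_le ?_
    have hg : Summable (fun k : ℕ => q ^ k) := summable_geometric_of_lt_one hq0 hq1
    refine ((hg.mul_left (q * (∑' n : ℕ, ((n:ℝ)+1) ^ (t.im - 5/2 : ℝ)))).congr ?_)
    intro k
    rw [pow_succ]
    ring
  have hFsum : Summable (Function.uncurry F) := Summable.of_norm hFnorm
  have hFnorm' : Summable (fun p : ℕ × ℕ => ‖F p.2 p.1‖) := hFnorm.prod_symm
  have hfib' : ∀ n, Summable (fun k => ‖F k n‖) := fun n => hFnorm'.prod_factor n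
  -- zeta identity
  have hzeta : ∀ k : ℕ, (∑' n, F k n) = (-1:ℂ)^k * (t / (2 * (π:ℂ)))^(k+1) * riemannZeta (s k) := by
    intro k
    rw [zeta_eq_tsum_one_div_nat_add_one_cpow (hsre1 k), ← tsum_mul_left]
  -- geometric identity
  have hgeo : ∀ n : ℕ, (∑' k, F k n) =
      Complex.exp ((-(1/2 : ℂ) - Complex.I * t) * Real.log ((n:ℝ) + 1)) *
        (t / (2 * π * ((n : ℂ) + 1) ^ 2 + t)) := by
    intro n
    set b : ℂ := (n:ℂ) + 1 with hb_def
    have hbpos : (0:ℝ) < (n:ℝ) + 1 := by positivity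
    have hb : b = (((n:ℝ) + 1 : ℝ) : ℂ) := by rw [hb_def]; push_cast; ring
    have hb0 : b ≠ 0 := by
      rw [hb]
      exact_mod_cast ne_of_gt hbpos
    set x : ℂ := t / (2 * (π:ℂ) * b^2) with hx_def
    have hd : (2 * (π:ℂ) * b^2) = ((2 * π * ((n:ℝ)+1)^2 : ℝ) : ℂ) := by
      rw [hb]; push_cast; ring
    have hdpos : (0:ℝ) < 2 * π * ((n:ℝ)+1)^2 := by positivity
    have hd0 : (2 * (π:ℂ) * b^2) ≠ 0 := by
      rw [hd]
      exact_mod_cast ne_of_gt hdpos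
    have hxnorm : ‖x‖ < 1 := by
      rw [hx_def, norm_div, hd]
      have h1 : (1:ℝ) ≤ ((n:ℝ)+1)^2 := by nlinarith [Nat.cast_nonneg (α := ℝ) n]
      have : ‖((2 * π * ((n:ℝ)+1)^2 : ℝ) : ℂ)‖ = 2 * π * ((n:ℝ)+1)^2 := by
        rw [Complex.norm_real, Real.norm_of_nonneg hdpos.le]
      rw [this]
      rw [div_lt_one hdpos]
      calc ‖t‖ < 2 * π := habs
        _ ≤ 2 * π * ((n:ℝ)+1)^2 := by nlinarith
    have hdt0 : 2 * (π:ℂ) * b ^ 2 + t ≠ 0 := by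
      intro h
      have ht : t = -(2 * (π:ℂ) * b^2) := by linear_combination h
      have : ‖t‖ = 2 * π * ((n:ℝ)+1)^2 := by
        rw [ht, norm_neg, hd, Complex.norm_real, Real.norm_of_nonneg hdpos.le]
      have h1 : (1:ℝ) ≤ ((n:ℝ)+1)^2 := by nlinarith [Nat.cast_nonneg (α := ℝ) n]
      nlinarith
    -- rewrite F k n
    have hkey : ∀ k : ℕ, F k n =
        (Complex.exp ((-(1/2 : ℂ) - Complex.I * t) * Real.log ((n:ℝ) + 1)) * x) * (-x)^k := by
      intro k
      have hsplit : b ^ (s k) = (b^2)^(k+1) * b ^ ((1:ℂ)/2 + Complex.I * t) := by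
        have h1 : s k = ((2*(k+1) : ℕ) : ℂ) + ((1:ℂ)/2 + Complex.I * t) := by
          rw [hs_def]; push_cast; ring
        rw [h1, Complex.cpow_add _ _ hb0, Complex.cpow_natCast]
        rw [pow_mul]
      have hlog : Complex.log b = ((Real.log ((n:ℝ) + 1) : ℝ) : ℂ) := by
        rw [hb, Complex.ofReal_log hbpos.le]
      have hexp : Complex.exp ((-(1/2 : ℂ) - Complex.I * t) * Real.log ((n:ℝ) + 1)) =
          1 / b ^ ((1:ℂ)/2 + Complex.I * t) := by
        rw [Complex.cpow_def_of_ne_zero hb0, hlog, eq_div_iff (Complex.exp_ne_zero _),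
          ← Complex.exp_add,
          show (-(1/2 : ℂ) - Complex.I * t) * ((Real.log ((n:ℝ) + 1) : ℝ) : ℂ) +
            ((Real.log ((n:ℝ) + 1) : ℝ) : ℂ) * ((1:ℂ)/2 + Complex.I * t) = 0 by ring,
          Complex.exp_zero]
      have hB0 : b ^ ((1:ℂ)/2 + Complex.I * t) ≠ 0 := by
        rw [Complex.cpow_def_of_ne_zero hb0]
        exact Complex.exp_ne_zero _
      have hx2 : x = t / (2 * (π:ℂ)) / b^2 := by rw [hx_def, div_div]
      have hC0 : (b^2 : ℂ) ≠ 0 := pow_ne_zero 2 hb0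
      rw [hF_def]
      simp only
      rw [show ((n:ℂ) + 1) = b from hb_def.symm, hsplit, hexp, hx2, neg_pow, div_pow]
      clear_value b x
      ring_nf
      simp only [div_pow, one_div, inv_pow]
      ring
    rw [tsum_congr hkey, tsum_mul_left, tsum_geometric_of_norm_lt_one (by rwa [norm_neg])]
    have hfrac : x * (1 - -x)⁻¹ = t / (2 * (π:ℂ) * b^2 + t) := by
      rw [hx_def]
      rw [sub_neg_eq_add]
      field_simp
    have : (2 : ℂ) * π * ((n:ℂ) + 1)^2 = 2 * (π:ℂ) * b^2 := by rw [hb_def]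
    rw [this, ← hfrac]
    ring
  -- summable in curried forms (complex valued)
  have hsum1 : ∀ k, Summable (fun n => F k n) := fun k => Summable.of_norm (hfib k)
  have hsum2 : ∀ n, Summable (fun k => F k n) := fun n => Summable.of_norm (hfib' n)
  have hsumN : Summable (fun n : ℕ => ∑' k, F k n) := by
    refine Summable.of_norm_bounded (g := fun n => ∑' k, ‖F k n‖)
      ((summable_prod_of_nonneg (fun p => norm_nonneg _)).1 hFnorm' |>.2)
      (fun n => norm_tsum_le_tsum_norm (hfib' n))
  have hsumK : Summable (fun k : ℕ => ∑' n, F k n) := by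
    refine Summable.of_norm_bounded (g := fun k => ∑' n, ‖F k n‖)
      ((summable_prod_of_nonneg (fun p => norm_nonneg _)).1 hFnorm |>.2)
      (fun k => norm_tsum_le_tsum_norm (hfib k))
  refine ⟨?_, ?_, ?_⟩
  · exact hsumN.congr fun n => (hgeo n)
  · exact hsumK.congr fun k => (hzeta k)
  · calc (∑' n : ℕ, Complex.exp ((-(1/2 : ℂ) - Complex.I * t) * Real.log ((n:ℝ) + 1)) *
        (t / (2 * π * ((n : ℂ) + 1) ^ 2 + t)))
        = ∑' (n : ℕ) (k : ℕ), F k n := tsum_congr fun n => (hgeo n).symm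
      _ = ∑' (k : ℕ) (n : ℕ), F k n := Summable.tsum_comm' hFsum hsum1 hsum2
      _ = ∑' k : ℕ, (-1 : ℂ) ^ k * (t / (2 * π)) ^ (k + 1) * riemannZeta (s k) :=
          tsum_congr fun k => hzeta k
end
end
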